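/- arXiv:2604.12769 — 5 statements merged into one kernel-verified Lean document; each statement's English description precedes it below -/
import Mathlib

section
/- There exists a constant C > 0 such that for all a, b ∈ ℝ, ∫_{T̂} (a² + b²)(φ(x)² + ‖∇φ(x)‖²) dx ≤ C ∫_{T̂} (a ∂₁φ(x) + b ∂₂φ(x))² dx; that is, the squared H¹(T̂)-norm of the bubble field (aφ, bφ) is controlled by the squared L²(T̂)-norm of its divergence. -/
open MeasureTheory
open scoped MeasureTheory

noncomputable section

abbrev E2 : Type := EuclideanSpace ℝ (Fin 2)

/-- The point `(a, b)` in `ℝ²`. -/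
def pt (a b : ℝ) : E2 := WithLp.toLp 2 ![a, b]

/-- The closed reference triangle with vertices `(0,0)`, `(1,0)`, `(0,1)`. -/
def refT : Set E2 := {x : E2 | 0 ≤ x 0 ∧ 0 ≤ x 1 ∧ x 0 + x 1 ≤ 1}

/-- The Fortin–Soulie bubble function. -/
def phi (x : E2) : ℝ := 2 - 3 * ((1 - x 0 - x 1) ^ 2 + (x 0) ^ 2 + (x 1) ^ 2)

/-- `i`-th partial derivative of a scalar function. -/
def dphi (i : Fin 2) (x : E2) : ℝ := fderiv ℝ phi x (EuclideanSpace.single i 1)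

/-- `f` is (the evaluation map of) a polynomial of total degree at most `n`. -/
def IsPolyDeg (n : ℕ) (f : E2 → ℝ) : Prop :=
  ∃ p : MvPolynomial (Fin 2) ℝ, p.totalDegree ≤ n ∧
    ∀ x : E2, f x = MvPolynomial.eval (fun i => x i) p

/-- Each component of `w` is a polynomial of total degree at most `n`. -/
def IsPolyVec (n : ℕ) (w : E2 → E2) : Prop :=
  ∀ i : Fin 2, IsPolyDeg n (fun x => w x i)

/-- The bubble vector field `(a φ, b φ)`. -/
def bub (a b : ℝ) (x : E2) : E2 := pt (a * phi x) (b * phi x)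

/-- Jacobian determinant. -/
def jdet (F : E2 → E2) (x : E2) : ℝ := LinearMap.det (fderiv ℝ F x : E2 →ₗ[ℝ] E2)

/-- Piola transform matrix `A(x) = DF(x)/det DF(x)` as a continuous linear map. -/
def piola (F : E2 → E2) (x : E2) : E2 →L[ℝ] E2 := (jdet F x)⁻¹ • fderiv ℝ F x

/-- Divergence: trace of the Jacobian. -/
def divg (f : E2 → E2) (x : E2) : ℝ :=
  LinearMap.trace ℝ E2 (fderiv ℝ f x : E2 →ₗ[ℝ] E2)

/-- `(K,h)`-admissible map. -/
def IsAdmissible (K h : ℝ) (F : E2 → E2) : Prop :=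
  IsPolyVec 2 F ∧ Set.InjOn F refT ∧
  ∀ x ∈ refT, ∃ e : E2 ≃L[ℝ] E2,
    (e : E2 →L[ℝ] E2) = fderiv ℝ F x ∧
    ‖(e : E2 →L[ℝ] E2)‖ ≤ K * h ∧
    ‖(e.symm : E2 →L[ℝ] E2)‖ ≤ K * h⁻¹ ∧
    ‖fderiv ℝ (fderiv ℝ F) x‖ ≤ K * h ^ 2 ∧
    K⁻¹ * h ^ 2 ≤ jdet F x ∧ jdet F x ≤ K * h ^ 2

/-- The six quadratic Lagrange nodes of the reference triangle. -/
def nodes : Set E2 :=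
  {pt 0 0, pt 1 0, pt 0 1, pt (1/2) 0, pt (1/2) (1/2), pt 0 (1/2)}

/-- `(P, Q)` are the endpoints of an edge of the reference triangle. -/
def IsEdgePair (P Q : E2) : Prop :=
  (P = pt 0 0 ∧ Q = pt 1 0) ∨ (P = pt 0 0 ∧ Q = pt 0 1) ∨ (P = pt 1 0 ∧ Q = pt 0 1)

/-- Sobolev seminorm `|v|_{W^{m,p}(S)}`. -/
def sobSemi (m : ℕ) (p : ℝ) (S : Set E2) (v : E2 → E2) : ℝ :=
  (∫ x in S, ‖iteratedFDeriv ℝ m v x‖ ^ p) ^ (1 / p)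



set_option maxHeartbeats 1000000 in
private lemma FS.pint (c0 c1 c2 c3 c4 c5 t : ℝ) :
    (∫ y in (0:ℝ)..t, (c0 + c1*y + c2*y^2 + c3*y^3 + c4*y^4 + c5*y^5)) =
      c0*t + c1*t^2/2 + c2*t^3/3 + c3*t^4/4 + c4*t^5/5 + c5*t^6/6 := by
  have h : ∀ y : ℝ, HasDerivAt (fun y : ℝ => c0*y + c1*y^2/2 + c2*y^3/3 + c3*y^4/4 + c4*y^5/5 + c5*y^6/6)
      (c0 + c1*y + c2*y^2 + c3*y^3 + c4*y^4 + c5*y^5) y := by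
    intro y
    have h1 : HasDerivAt (fun y : ℝ => y) 1 y := hasDerivAt_id y
    have h2 := hasDerivAt_pow 2 y
    have h3 := hasDerivAt_pow 3 y
    have h4 := hasDerivAt_pow 4 y
    have h5 := hasDerivAt_pow 5 y
    have h6 := hasDerivAt_pow 6 y
    have H := ((((((h1.const_mul c0).add (h2.const_mul (c1/2))).add (h3.const_mul (c2/3))).add
      (h4.const_mul (c3/4))).add (h5.const_mul (c4/5))).add (h6.const_mul (c5/6)))
    refine (H.congr_deriv (by push_cast; ring)).congr_of_eventuallyEq
      (Filter.Eventually.of_forall fun z => ?_)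
    simp only [Pi.add_apply]; ring
  rw [intervalIntegral.integral_eq_sub_of_hasDerivAt (fun y _ => h y)
    ((Continuous.intervalIntegrable (by fun_prop) 0 t))]
  ring

/-- The reference triangle as a subset of `ℝ × ℝ`. -/
private def FS.triT : Set (ℝ × ℝ) := {p | 0 ≤ p.1 ∧ 0 ≤ p.2 ∧ p.1 + p.2 ≤ 1}

private lemma FS.isClosed_triT : IsClosed FS.triT := by
  have : FS.triT = {p : ℝ×ℝ | 0 ≤ p.1} ∩ ({p | 0 ≤ p.2} ∩ {p | p.1 + p.2 ≤ 1}) := rfl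
  rw [this]
  exact (isClosed_le continuous_const continuous_fst).inter
    ((isClosed_le continuous_const continuous_snd).inter
      (isClosed_le (continuous_fst.add continuous_snd) continuous_const))

private lemma FS.isCompact_triT : IsCompact FS.triT := by
  refine (isCompact_Icc (a := ((0:ℝ),(0:ℝ))) (b := (1,1))).of_isClosed_subset FS.isClosed_triT ?_
  rintro ⟨x, y⟩ ⟨h1, h2, h3⟩
  exact ⟨⟨h1, h2⟩, ⟨by dsimp at *; linarith, by dsimp at *; linarith⟩⟩

private lemma FS.tri_fubini (F : ℝ → ℝ → ℝ) (hF : Continuous fun p : ℝ × ℝ => F p.1 p.2) :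
    (∫ p in FS.triT, F p.1 p.2) = ∫ x in (0:ℝ)..1, ∫ y in (0:ℝ)..(1-x), F x y := by
  have hT : MeasurableSet FS.triT := FS.isClosed_triT.measurableSet
  have hint : Integrable (FS.triT.indicator fun p : ℝ×ℝ => F p.1 p.2) := by
    rw [integrable_indicator_iff hT]
    exact hF.continuousOn.integrableOn_compact FS.isCompact_triT
  rw [← integral_indicator hT]
  rw [Measure.volume_eq_prod] at hint ⊢
  rw [integral_prod _ hint]
  have inner : ∀ x : ℝ, (∫ y, FS.triT.indicator (fun p : ℝ×ℝ => F p.1 p.2) (x, y)) =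
      (Set.Icc (0:ℝ) 1).indicator (fun x => ∫ y in (0:ℝ)..(1-x), F x y) x := by
    intro x
    by_cases hx : x ∈ Set.Icc (0:ℝ) 1
    · rw [Set.indicator_of_mem hx]
      have hxy : ∀ y : ℝ, FS.triT.indicator (fun p : ℝ×ℝ => F p.1 p.2) (x, y)
          = (Set.Icc (0:ℝ) (1-x)).indicator (fun y => F x y) y := by
        intro y
        by_cases hy : y ∈ Set.Icc (0:ℝ) (1-x)
        · rw [Set.indicator_of_mem hy, Set.indicator_of_mem]
          exact ⟨hx.1, hy.1, by have := hy.2; dsimp; linarith⟩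
        · rw [Set.indicator_of_notMem hy, Set.indicator_of_notMem]
          intro hm
          exact hy ⟨hm.2.1, by have := hm.2.2; dsimp at this; linarith⟩
      simp only [hxy]
      rw [integral_indicator measurableSet_Icc, integral_Icc_eq_integral_Ioc,
        ← intervalIntegral.integral_of_le (by have := hx.2; linarith : (0:ℝ) ≤ 1 - x)]
    · rw [Set.indicator_of_notMem hx]
      have hxy : ∀ y : ℝ, FS.triT.indicator (fun p : ℝ×ℝ => F p.1 p.2) (x, y) = 0 := by
        intro y
        rw [Set.indicator_of_notMem]
        intro hm
        refine hx ⟨hm.1, ?_⟩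
        have h2 := hm.2.1; have h3 := hm.2.2; dsimp at h2 h3; linarith
      simp only [hxy, integral_zero]
  simp only [inner]
  rw [integral_indicator measurableSet_Icc, integral_Icc_eq_integral_Ioc,
    ← intervalIntegral.integral_of_le (by norm_num : (0:ℝ) ≤ 1)]

/-- Measurable equivalence `ℝ × ℝ ≃ᵐ E2`. -/
private def FS.meq2 : (ℝ × ℝ) ≃ᵐ E2 :=
  (MeasurableEquiv.piFinTwo fun _ : Fin 2 => ℝ).symm.trans
    (MeasurableEquiv.toLp 2 (Fin 2 → ℝ))

private lemma FS.meq2_apply0 (p : ℝ × ℝ) : (FS.meq2 p) 0 = p.1 := rfl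
private lemma FS.meq2_apply1 (p : ℝ × ℝ) : (FS.meq2 p) 1 = p.2 := rfl

private lemma FS.meq2_mp : MeasurePreserving (⇑FS.meq2) volume volume :=
  ((EuclideanSpace.volume_preserving_symm_measurableEquiv_toLp (Fin 2)).symm _).comp
    ((volume_preserving_piFinTwo fun _ : Fin 2 => ℝ).symm _)

private lemma FS.refT_fubini (f : E2 → ℝ) (F : ℝ → ℝ → ℝ) (heq : ∀ x : E2, f x = F (x 0) (x 1))
    (hF : Continuous fun p : ℝ × ℝ => F p.1 p.2) :
    (∫ x in refT, f x) = ∫ x in (0:ℝ)..1, ∫ y in (0:ℝ)..(1-x), F x y := by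
  have key := FS.meq2_mp.setIntegral_preimage_emb FS.meq2.measurableEmbedding f refT
  have hpre : ⇑FS.meq2 ⁻¹' refT = FS.triT := by
    ext p
    simp only [Set.mem_preimage, refT, Set.mem_setOf_eq, FS.meq2_apply0, FS.meq2_apply1, FS.triT]
  rw [← key, hpre, ← FS.tri_fubini F hF]
  refine setIntegral_congr_fun FS.isClosed_triT.measurableSet (fun p _ => ?_)
  rw [heq, FS.meq2_apply0, FS.meq2_apply1]

private lemma FS.hasFDerivAt_sq {x : E2} {f : E2 → ℝ} {f' : E2 →L[ℝ] ℝ} (h : HasFDerivAt f f' x) :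
    HasFDerivAt (fun y => f y ^ 2) ((2 * f x) • f') x := by
  have h2 := h.mul h
  have e : (fun y => f y ^ 2) = fun y => f y * f y := by funext y; ring
  rw [e]
  exact h2.congr_fderiv (by rw [two_mul, add_smul])

private lemma FS.phi_hasFDerivAt (x : E2) : HasFDerivAt phi
    ((0:E2 →L[ℝ] ℝ) - (3:ℝ) • (((2 * (1 - x 0 - x 1)) • ((0:E2 →L[ℝ] ℝ) - EuclideanSpace.proj 0 - EuclideanSpace.proj 1)
      + (2 * x 0) • (EuclideanSpace.proj (0:Fin 2) : E2 →L[ℝ] ℝ))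
      + (2 * x 1) • (EuclideanSpace.proj (1:Fin 2) : E2 →L[ℝ] ℝ))) x := by
  have h0 : HasFDerivAt (fun y : E2 => y 0) (EuclideanSpace.proj (0:Fin 2) : E2 →L[ℝ] ℝ) x :=
    (EuclideanSpace.proj (0:Fin 2) : E2 →L[ℝ] ℝ).hasFDerivAt
  have h1 : HasFDerivAt (fun y : E2 => y 1) (EuclideanSpace.proj (1:Fin 2) : E2 →L[ℝ] ℝ) x :=
    (EuclideanSpace.proj (1:Fin 2) : E2 →L[ℝ] ℝ).hasFDerivAt
  exact (hasFDerivAt_const (2:ℝ) x).sub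
    ((((FS.hasFDerivAt_sq (((hasFDerivAt_const (1:ℝ) x).sub h0).sub h1)).add
      (FS.hasFDerivAt_sq h0)).add (FS.hasFDerivAt_sq h1)).const_mul (3:ℝ))

private lemma FS.dphi0_eq (x : E2) : dphi 0 x = 6 - 12 * x 0 - 6 * x 1 := by
  rw [dphi, (FS.phi_hasFDerivAt x).fderiv]
  simp [EuclideanSpace.single_apply]
  ring

private lemma FS.dphi1_eq (x : E2) : dphi 1 x = 6 - 6 * x 0 - 12 * x 1 := by
  rw [dphi, (FS.phi_hasFDerivAt x).fderiv]
  simp [EuclideanSpace.single_apply]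
  ring

private lemma FS.grad_sq (x : E2) : ‖gradient phi x‖^2 = (dphi 0 x)^2 + (dphi 1 x)^2 := by
  have hg : ∀ i : Fin 2, gradient phi x i = dphi i x := by
    intro i
    have h1 : (inner ℝ (gradient phi x) (EuclideanSpace.single i (1:ℝ)) : ℝ) = gradient phi x i := by
      rw [EuclideanSpace.inner_single_right]; simp
    rw [← h1, gradient, InnerProductSpace.toDual_symm_apply, dphi]
  rw [EuclideanSpace.norm_eq, Real.sq_sqrt (by positivity)]
  simp [Fin.sum_univ_two, hg, sq_abs]


set_option maxHeartbeats 1000000 in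
/-- the squared `H¹(T̂)`-norm of the bubble field `(aφ, bφ)` is
controlled by the squared `L²(T̂)`-norm of its divergence. -/
theorem stmt1 :
    ∃ C > (0 : ℝ), ∀ a b : ℝ,
      (∫ x in refT, (a ^ 2 + b ^ 2) * (phi x ^ 2 + ‖gradient phi x‖ ^ 2)) ≤
        C * ∫ x in refT, (a * dphi 0 x + b * dphi 1 x) ^ 2 := by
  refine ⟨5, by norm_num, fun a b => ?_⟩
  have hR : (∫ x in refT, (a * dphi 0 x + b * dphi 1 x) ^ 2) = 3*(a^2 + a*b + b^2) := by
    rw [FS.refT_fubini _ (fun u v => (a*(6-12*u-6*v) + b*(6-6*u-12*v))^2)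
      (fun x => by rw [FS.dphi0_eq, FS.dphi1_eq]) (by fun_prop)]
    have inner : ∀ u : ℝ, (∫ v in (0:ℝ)..(1-u), (a*(6-12*u-6*v) + b*(6-6*u-12*v))^2)
        = (12*b^2 + 12*a*b + 12*a^2) + (-36*b^2 - 36*a*b - 72*a^2)*u
          + (36*b^2 + 36*a*b + 144*a^2)*u^2 + (-12*b^2 - 12*a*b - 84*a^2)*u^3 := by
      intro u
      rw [show (fun v => (a*(6-12*u-6*v) + b*(6-6*u-12*v))^2)
          = fun v => ((36*b^2 - 72*b^2*u + 36*b^2*u^2 + 72*a*b - 216*a*b*u + 144*a*b*u^2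
              + 36*a^2 - 144*a^2*u + 144*a^2*u^2)
            + (-144*b^2 + 144*b^2*u - 216*a*b + 360*a*b*u - 72*a^2 + 144*a^2*u)*v
            + (144*b^2 + 144*a*b + 36*a^2)*v^2 + 0*v^3 + 0*v^4 + 0*v^5)
          from funext fun v => by ring]
      rw [FS.pint]
      ring
    simp only [inner]
    rw [show (fun u : ℝ => (12*b^2 + 12*a*b + 12*a^2) + (-36*b^2 - 36*a*b - 72*a^2)*u
          + (36*b^2 + 36*a*b + 144*a^2)*u^2 + (-12*b^2 - 12*a*b - 84*a^2)*u^3)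
        = fun u => ((12*b^2 + 12*a*b + 12*a^2) + (-36*b^2 - 36*a*b - 72*a^2)*u
          + (36*b^2 + 36*a*b + 144*a^2)*u^2 + (-12*b^2 - 12*a*b - 84*a^2)*u^3 + 0*u^4 + 0*u^5)
        from funext fun u => by ring]
    rw [FS.pint]
    ring
  have hL : (∫ x in refT, (a ^ 2 + b ^ 2) * (phi x ^ 2 + ‖gradient phi x‖ ^ 2))
      = (a^2 + b^2) * (31/5) := by
    rw [MeasureTheory.integral_const_mul]
    congr 1
    rw [FS.refT_fubini _ (fun u v => (2 - 3*((1-u-v)^2 + u^2 + v^2))^2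
        + (6-12*u-6*v)^2 + (6-6*u-12*v)^2)
      (fun x => by rw [FS.grad_sq, FS.dphi0_eq, FS.dphi1_eq, phi]; ring) (by fun_prop)]
    have inner : ∀ u : ℝ, (∫ v in (0:ℝ)..(1-u), ((2 - 3*((1-u-v)^2 + u^2 + v^2))^2
          + (6-12*u-6*v)^2 + (6-6*u-12*v)^2))
        = (121/5:ℝ) + (-109)*u + 198*u^2 + (-154)*u^3 + 66*u^4 + (-126/5)*u^5 := by
      intro u
      rw [show (fun v => (2 - 3*((1-u-v)^2 + u^2 + v^2))^2 + (6-12*u-6*v)^2 + (6-6*u-12*v)^2)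
          = fun v => ((73 - 228*u + 228*u^2 - 72*u^3 + 36*u^4)
            + (-228 + 372*u - 144*u^2 + 72*u^3)*v
            + (228 - 144*u + 108*u^2)*v^2 + (-72 + 72*u)*v^3 + 36*v^4 + 0*v^5)
          from funext fun v => by ring]
      rw [FS.pint]
      ring
    simp only [inner]
    rw [show (fun u : ℝ => (121/5:ℝ) + (-109)*u + 198*u^2 + (-154)*u^3 + 66*u^4 + (-126/5)*u^5)
        = fun u => ((121/5:ℝ) + (-109)*u + 198*u^2 + (-154)*u^3 + 66*u^4 + (-126/5)*u^5)
        from rfl]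
    rw [FS.pint]
    norm_num
  rw [hL, hR]
  nlinarith [sq_nonneg (a+b), sq_nonneg (a-b), sq_nonneg a, sq_nonneg b]
end
end

section
/- There exists a constant C > 0 such that for every polynomial q : ℝ² → ℝ of total degree at most 1 with ∫_{T̂} q(x) dx = 0, there exist a, b ∈ ℝ with a ∂₁φ + b ∂₂φ = q identically on ℝ², and ∫_{T̂} (a² + b²)(φ(x)² + ‖∇φ(x)‖²) dx ≤ C ∫_{T̂} q(x)² dx. -/
open MeasureTheory
open scoped MeasureTheory

noncomputable section

namespace StmtAux

def T2 : Set (ℝ × ℝ) := {p | 0 ≤ p.1 ∧ 0 ≤ p.2 ∧ p.1 + p.2 ≤ 1}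

def Psi : (ℝ × ℝ) ≃ᵐ E2 :=
  (MeasurableEquiv.finTwoArrow).symm.trans (MeasurableEquiv.toLp 2 (Fin 2 → ℝ))

lemma psi_apply0 (p : ℝ × ℝ) : (Psi p) 0 = p.1 := by
  simp [Psi, MeasurableEquiv.finTwoArrow, MeasurableEquiv.coe_toLp]

lemma psi_apply1 (p : ℝ × ℝ) : (Psi p) 1 = p.2 := by
  simp [Psi, MeasurableEquiv.finTwoArrow, MeasurableEquiv.coe_toLp]

lemma psi_mp : MeasurePreserving Psi := by
  have h1 := PiLp.volume_preserving_toLp (Fin 2)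
  have h2 := (volume_preserving_finTwoArrow ℝ).symm (MeasurableEquiv.finTwoArrow)
  show MeasurePreserving ⇑Psi
  rw [Psi, MeasurableEquiv.coe_trans, MeasurableEquiv.coe_toLp]
  exact h1.comp h2

lemma transfer (f : E2 → ℝ) :
    ∫ x in refT, f x = ∫ p in T2, f (Psi p) := by
  have h := psi_mp.setIntegral_preimage_emb Psi.measurableEmbedding f refT
  rw [← h]
  have hpre : ⇑Psi ⁻¹' refT = T2 := by
    ext p
    simp [refT, T2, psi_apply0, psi_apply1]
  rw [hpre]

lemma T2_isCompact : IsCompact T2 := by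
  have hclosed : IsClosed T2 := by
    have : T2 = {p : ℝ × ℝ | 0 ≤ p.1} ∩ {p | 0 ≤ p.2} ∩ {p | p.1 + p.2 ≤ 1} := by
      ext p; simp [T2]; tauto
    rw [this]
    exact ((isClosed_le continuous_const continuous_fst).inter
      (isClosed_le continuous_const continuous_snd)).inter
      (isClosed_le (continuous_fst.add continuous_snd) continuous_const)
  have hbdd : Bornology.IsBounded T2 := by
    apply Bornology.IsBounded.subset (Metric.isBounded_Icc ((0:ℝ),(0:ℝ)) (1,1))
    rintro ⟨x, y⟩ ⟨hx, hy, hxy⟩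
    simp only [Set.mem_Icc, Prod.mk_le_mk]
    constructor <;> constructor <;> simp only at hx hy hxy <;> linarith
  exact Metric.isCompact_of_isClosed_isBounded hclosed hbdd

lemma T2_measurable : MeasurableSet T2 := T2_isCompact.isClosed.measurableSet

lemma tri_integral (g : ℝ → ℝ → ℝ) (hg : Continuous fun p : ℝ × ℝ => g p.1 p.2) :
    ∫ p in T2, g p.1 p.2 = ∫ x in (0:ℝ)..1, ∫ y in (0:ℝ)..(1-x), g x y := by
  set G : ℝ × ℝ → ℝ := fun p => g p.1 p.2 with hG
  have hIntOn : IntegrableOn G T2 := hg.continuousOn.integrableOn_compact T2_isCompact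
  have hInd : Integrable (T2.indicator G) :=
    (integrable_indicator_iff T2_measurable).2 hIntOn
  have h1 : ∫ p in T2, G p = ∫ p, T2.indicator G p := (integral_indicator T2_measurable).symm
  rw [h1]
  rw [show (volume : Measure (ℝ × ℝ)) = (volume : Measure ℝ).prod volume from
    (Measure.volume_eq_prod ℝ ℝ)]
  rw [integral_prod _ (by rwa [← Measure.volume_eq_prod])]
  have hinner : ∀ x : ℝ, (∫ y, T2.indicator G (x, y)) =
      (Set.Icc (0:ℝ) 1).indicator (fun x => ∫ y in (0:ℝ)..(1-x), g x y) x := by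
    intro x
    by_cases hx : 0 ≤ x ∧ x ≤ 1
    · have hfun : (fun y => T2.indicator G (x, y)) =
          (Set.Icc (0:ℝ) (1-x)).indicator (fun y => g x y) := by
        funext y
        by_cases hy : 0 ≤ y ∧ y ≤ 1 - x
        · rw [Set.indicator_of_mem
            (show (x,y) ∈ T2 from ⟨hx.1, hy.1, by dsimp only; linarith [hy.2]⟩),
            Set.indicator_of_mem (Set.mem_Icc.2 ⟨hy.1, hy.2⟩)]
        · rw [Set.indicator_of_notMem (show (x,y) ∉ T2 by
            intro hmem
            exact hy ⟨hmem.2.1, by have := hmem.2.2; dsimp only at this; linarith⟩),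
            Set.indicator_of_notMem (by simpa [Set.mem_Icc] using hy)]
      rw [hfun, integral_indicator measurableSet_Icc,
        Set.indicator_of_mem (Set.mem_Icc.2 hx),
        MeasureTheory.integral_Icc_eq_integral_Ioc,
        ← intervalIntegral.integral_of_le (by linarith [hx.2])]
    · have hfun : (fun y => T2.indicator G (x, y)) = fun _ => (0:ℝ) := by
        funext y
        rw [Set.indicator_of_notMem]
        intro hmem
        rcases hmem with ⟨h1', h2', h3'⟩
        simp only at h1' h2' h3'
        exact hx ⟨h1', by linarith⟩
      rw [hfun, Set.indicator_of_notMem (by simpa [Set.mem_Icc] using hx)]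
      simp
  simp_rw [hinner]
  rw [integral_indicator measurableSet_Icc, MeasureTheory.integral_Icc_eq_integral_Ioc,
    ← intervalIntegral.integral_of_le (by norm_num : (0:ℝ) ≤ 1)]

open intervalIntegral in
lemma ipoly (a b c d : ℝ) :
    ∫ x in (0:ℝ)..1, (a + b*x + c*x^2 + d*x^3) = a + b/2 + c/3 + d/4 := by
  have h1 : IntervalIntegrable (fun _ : ℝ => a) volume 0 1 := intervalIntegrable_const
  have h2 : IntervalIntegrable (fun x : ℝ => b*x) volume 0 1 :=
    (continuous_const.mul continuous_id).intervalIntegrable _ _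
  have h3 : IntervalIntegrable (fun x : ℝ => c*x^2) volume 0 1 :=
    (continuous_const.mul (continuous_pow 2)).intervalIntegrable _ _
  have h4 : IntervalIntegrable (fun x : ℝ => d*x^3) volume 0 1 :=
    (continuous_const.mul (continuous_pow 3)).intervalIntegrable _ _
  rw [integral_add ((h1.add h2).add h3) h4, integral_add (h1.add h2) h3,
    integral_add h1 h2, intervalIntegral.integral_const, intervalIntegral.integral_const_mul,
    intervalIntegral.integral_const_mul, intervalIntegral.integral_const_mul, integral_id, integral_pow, integral_pow]
  norm_num
  ring

open intervalIntegral in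
lemma m00 : ∫ p in T2, (1:ℝ) = 1/2 := by
  rw [tri_integral (fun _ _ => (1:ℝ)) continuous_const]
  have : ∀ x : ℝ, (∫ _ in (0:ℝ)..(1-x), (1:ℝ)) = 1 + (-1)*x + 0*x^2 + 0*x^3 := by
    intro x; rw [intervalIntegral.integral_const]; simp; ring
  rw [integral_congr (fun x _ => this x), ipoly]; norm_num

open intervalIntegral in
lemma m10 : ∫ p in T2, p.1 = 1/6 := by
  rw [show (∫ p in T2, p.1) = ∫ p in T2, (fun x _ => x) p.1 p.2 from rfl,
    tri_integral (fun x _ => x) continuous_fst]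
  have : ∀ x : ℝ, (∫ _ in (0:ℝ)..(1-x), x) = 0 + 1*x + (-1)*x^2 + 0*x^3 := by
    intro x; rw [intervalIntegral.integral_const]; simp; ring
  rw [integral_congr (fun x _ => this x), ipoly]; norm_num

open intervalIntegral in
lemma m01 : ∫ p in T2, p.2 = 1/6 := by
  rw [show (∫ p in T2, p.2) = ∫ p in T2, (fun _ y => y) p.1 p.2 from rfl,
    tri_integral (fun _ y => y) continuous_snd]
  have : ∀ x : ℝ, (∫ y in (0:ℝ)..(1-x), y) = 1/2 + (-1)*x + (1/2)*x^2 + 0*x^3 := by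
    intro x; rw [integral_id]; ring
  rw [integral_congr (fun x _ => this x), ipoly]; norm_num

open intervalIntegral in
lemma m20 : ∫ p in T2, p.1^2 = 1/12 := by
  rw [show (∫ p in T2, p.1^2) = ∫ p in T2, (fun x _ => x^2) p.1 p.2 from rfl,
    tri_integral (fun x _ => x^2) (continuous_fst.pow 2)]
  have : ∀ x : ℝ, (∫ _ in (0:ℝ)..(1-x), x^2) = 0 + 0*x + 1*x^2 + (-1)*x^3 := by
    intro x; rw [intervalIntegral.integral_const]; simp; ring
  rw [integral_congr (fun x _ => this x), ipoly]; norm_num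

open intervalIntegral in
lemma m02 : ∫ p in T2, p.2^2 = 1/12 := by
  rw [show (∫ p in T2, p.2^2) = ∫ p in T2, (fun _ y => y^2) p.1 p.2 from rfl,
    tri_integral (fun _ y => y^2) (continuous_snd.pow 2)]
  have : ∀ x : ℝ, (∫ y in (0:ℝ)..(1-x), y^2) = 1/3 + (-1)*x + 1*x^2 + (-1/3)*x^3 := by
    intro x; rw [integral_pow]; push_cast; ring
  rw [integral_congr (fun x _ => this x), ipoly]; norm_num

open intervalIntegral in
lemma m11 : ∫ p in T2, p.1*p.2 = 1/24 := by
  rw [show (∫ p in T2, p.1*p.2) = ∫ p in T2, (fun x y => x*y) p.1 p.2 from rfl,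
    tri_integral (fun x y => x*y) (continuous_fst.mul continuous_snd)]
  have : ∀ x : ℝ, (∫ y in (0:ℝ)..(1-x), x*y) = 0 + (1/2)*x + (-1)*x^2 + (1/2)*x^3 := by
    intro x; rw [intervalIntegral.integral_const_mul, integral_id]; ring
  rw [integral_congr (fun x _ => this x), ipoly]; norm_num

lemma integrableOn_T2 (f : ℝ × ℝ → ℝ) (hf : Continuous f) : IntegrableOn f T2 :=
  hf.continuousOn.integrableOn_compact T2_isCompact

lemma T2_poly1 (α β γ : ℝ) :
    ∫ p in T2, (α + β * p.1 + γ * p.2) = α/2 + β/6 + γ/6 := by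
  have h1 := integrableOn_T2 (fun p => α + β * p.1) (by fun_prop)
  have h2 := integrableOn_T2 (fun p => γ * p.2) (by fun_prop)
  have h3 := integrableOn_T2 (fun _ => (α : ℝ)) continuous_const
  have h4 := integrableOn_T2 (fun p => β * p.1) (by fun_prop)
  rw [show (fun p : ℝ × ℝ => α + β * p.1 + γ * p.2) = fun p =>
    (α + β * p.1) + γ * p.2 from rfl] at *
  rw [integral_add h1 h2, integral_add h3 h4, integral_const_mul, integral_const_mul,
    m10, m01]
  have : ∫ p in T2, (fun _ : ℝ × ℝ => α) p = α * (1/2) := by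
    rw [show (fun _ : ℝ × ℝ => α) = fun p : ℝ × ℝ => α * (1:ℝ) by funext; ring,
      integral_const_mul, m00]
  rw [this]; ring

lemma T2_poly2 (α β γ : ℝ) :
    ∫ p in T2, (α + β * p.1 + γ * p.2)^2 =
      α^2/2 + α*β/3 + α*γ/3 + β^2/12 + γ^2/12 + β*γ/12 := by
  have key : (fun p : ℝ × ℝ => (α + β * p.1 + γ * p.2)^2) = fun p =>
      ((((α^2 * (1:ℝ) + β^2 * p.1^2) + γ^2 * p.2^2) + (2*α*β) * p.1) + (2*α*γ) * p.2)
        + (2*β*γ) * (p.1 * p.2) := by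
    funext p; ring
  rw [key]
  have i1 := integrableOn_T2 (fun _ => α^2 * (1:ℝ)) (by fun_prop)
  have i2 := integrableOn_T2 (fun p => β^2 * p.1^2) (by fun_prop)
  have i3 := integrableOn_T2 (fun p => γ^2 * p.2^2) (by fun_prop)
  have i4 := integrableOn_T2 (fun p => (2*α*β) * p.1) (by fun_prop)
  have i5 := integrableOn_T2 (fun p => (2*α*γ) * p.2) (by fun_prop)
  have i6 := integrableOn_T2 (fun p => (2*β*γ) * (p.1 * p.2)) (by fun_prop)
  have i14 := integrableOn_T2 (fun p => α^2 * (1:ℝ) + β^2 * p.1^2 + γ^2 * p.2^2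
    + (2*α*β) * p.1) (by fun_prop)
  have i13 := integrableOn_T2 (fun p => α^2 * (1:ℝ) + β^2 * p.1^2 + γ^2 * p.2^2) (by fun_prop)
  have i12 := integrableOn_T2 (fun p => α^2 * (1:ℝ) + β^2 * p.1^2) (by fun_prop)
  have i15 := integrableOn_T2 (fun p => α^2 * (1:ℝ) + β^2 * p.1^2 + γ^2 * p.2^2
    + (2*α*β) * p.1 + (2*α*γ) * p.2) (by fun_prop)
  have h6 : (∫ p in T2, (α^2 * (1:ℝ) + β^2 * p.1^2 + γ^2 * p.2^2 + (2*α*β) * p.1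
      + (2*α*γ) * p.2 + (2*β*γ) * (p.1 * p.2))) =
      (∫ p in T2, (α^2 * (1:ℝ) + β^2 * p.1^2 + γ^2 * p.2^2 + (2*α*β) * p.1 + (2*α*γ) * p.2))
      + ∫ p in T2, (2*β*γ) * (p.1 * p.2) := integral_add i15 i6
  have h5 : (∫ p in T2, (α^2 * (1:ℝ) + β^2 * p.1^2 + γ^2 * p.2^2 + (2*α*β) * p.1
      + (2*α*γ) * p.2)) =
      (∫ p in T2, (α^2 * (1:ℝ) + β^2 * p.1^2 + γ^2 * p.2^2 + (2*α*β) * p.1))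
      + ∫ p in T2, (2*α*γ) * p.2 := integral_add i14 i5
  have h4 : (∫ p in T2, (α^2 * (1:ℝ) + β^2 * p.1^2 + γ^2 * p.2^2 + (2*α*β) * p.1)) =
      (∫ p in T2, (α^2 * (1:ℝ) + β^2 * p.1^2 + γ^2 * p.2^2))
      + ∫ p in T2, (2*α*β) * p.1 := integral_add i13 i4
  have h3 : (∫ p in T2, (α^2 * (1:ℝ) + β^2 * p.1^2 + γ^2 * p.2^2)) =
      (∫ p in T2, (α^2 * (1:ℝ) + β^2 * p.1^2)) + ∫ p in T2, γ^2 * p.2^2 :=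
    integral_add i12 i3
  have h2 : (∫ p in T2, (α^2 * (1:ℝ) + β^2 * p.1^2)) =
      (∫ p in T2, α^2 * (1:ℝ)) + ∫ p in T2, β^2 * p.1^2 := integral_add i1 i2
  rw [h6, h5, h4, h3, h2, integral_const_mul, integral_const_mul, integral_const_mul,
    integral_const_mul, integral_const_mul, integral_const_mul,
    m00, m10, m01, m20, m02, m11]
  ring

def p0 : E2 →L[ℝ] ℝ := EuclideanSpace.proj (0 : Fin 2)
def p1 : E2 →L[ℝ] ℝ := EuclideanSpace.proj (1 : Fin 2)

lemma hasFDerivAt_phi (x : E2) :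
    HasFDerivAt phi ((6 - 12 * x 0 - 6 * x 1) • p0 + (6 - 6 * x 0 - 12 * x 1) • p1) x := by
  have h0 : HasFDerivAt (fun y : E2 => y 0) p0 x := p0.hasFDerivAt
  have h1 : HasFDerivAt (fun y : E2 => y 1) p1 x := p1.hasFDerivAt
  have hg := (h0.const_sub 1).sub h1
  have h : HasFDerivAt (fun y : E2 => 2 - 3 * ((1 - y 0 - y 1) * (1 - y 0 - y 1) +
      (y 0) * (y 0) + (y 1) * (y 1))) _ x :=
    ((((hg.mul hg).add (h0.mul h0)).add (h1.mul h1)).const_mul 3).const_sub 2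
  have hphi : phi = fun y : E2 => 2 - 3 * ((1 - y 0 - y 1) * (1 - y 0 - y 1) +
      (y 0) * (y 0) + (y 1) * (y 1)) := by
    funext y; simp [phi]; ring
  rw [hphi]
  refine h.congr_fderiv ?_
  ext v
  simp [p0, p1, EuclideanSpace.proj]
  ring

lemma dphi0 (x : E2) : dphi 0 x = 6 - 12 * x 0 - 6 * x 1 := by
  rw [dphi, (hasFDerivAt_phi x).fderiv]
  simp [p0, p1, EuclideanSpace.proj, EuclideanSpace.single_apply]

lemma dphi1 (x : E2) : dphi 1 x = 6 - 6 * x 0 - 12 * x 1 := by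
  rw [dphi, (hasFDerivAt_phi x).fderiv]
  simp [p0, p1, EuclideanSpace.proj, EuclideanSpace.single_apply]

lemma gradient_phi (x : E2) :
    gradient phi x = pt (6 - 12 * x 0 - 6 * x 1) (6 - 6 * x 0 - 12 * x 1) := by
  have key : InnerProductSpace.toDual ℝ E2
      (pt (6 - 12 * x 0 - 6 * x 1) (6 - 6 * x 0 - 12 * x 1)) = fderiv ℝ phi x := by
    rw [(hasFDerivAt_phi x).fderiv]
    ext v
    rw [InnerProductSpace.toDual_apply_apply]
    simp [p0, p1, pt, PiLp.inner_apply, Fin.sum_univ_two, RCLike.inner_apply]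
    ring
  unfold gradient
  rw [← key, LinearIsometryEquiv.symm_apply_apply]

lemma norm_gradient_phi_sq (x : E2) :
    ‖gradient phi x‖ ^ 2 = (6 - 12 * x 0 - 6 * x 1)^2 + (6 - 6 * x 0 - 12 * x 1)^2 := by
  rw [gradient_phi, EuclideanSpace.norm_eq]
  rw [Real.sq_sqrt (by positivity)]
  simp [pt, Fin.sum_univ_two, sq_abs]

lemma affine_of_deg_le_one (p : MvPolynomial (Fin 2) ℝ) (hp : p.totalDegree ≤ 1)
    (x : Fin 2 → ℝ) :
    MvPolynomial.eval x p = p.coeff 0 + p.coeff (Finsupp.single 0 1) * x 0 +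
      p.coeff (Finsupp.single 1 1) * x 1 := by
  classical
  have hsupp : p.support ⊆ {0, Finsupp.single 0 1, Finsupp.single 1 1} := by
    intro d hd
    have hdeg : d.sum (fun _ e => e) ≤ 1 := le_trans (MvPolynomial.le_totalDegree hd) hp
    have hsum : d 0 + d 1 ≤ 1 := by
      have : d.sum (fun _ e => e) = d 0 + d 1 := by
        rw [Finsupp.sum_fintype _ _ (fun _ => rfl), Fin.sum_univ_two]
      omega
    simp only [Finset.mem_insert, Finset.mem_singleton]
    rcases Nat.le_one_iff_eq_zero_or_eq_one.1 (le_trans (Nat.le_add_right _ _) hsum) with h0 | h0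
    · rcases Nat.le_one_iff_eq_zero_or_eq_one.1 (le_trans (Nat.le_add_left _ _) hsum) with h1 | h1
      · left; ext i; fin_cases i <;> simp [h0, h1]
      · right; right; ext i; fin_cases i <;> simp [h0, h1]
    · have h1 : d 1 = 0 := by omega
      right; left; ext i; fin_cases i <;> simp [h0, h1]
  rw [MvPolynomial.eval_eq]
  rw [Finset.sum_subset hsupp (fun d _ hd => by
    rw [MvPolynomial.notMem_support_iff.1 hd, zero_mul])]
  have hne1 : (0 : Fin 2 →₀ ℕ) ≠ Finsupp.single 0 1 := by
    intro h; have := DFunLike.congr_fun h 0; simp at this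
  have hne2 : (0 : Fin 2 →₀ ℕ) ≠ Finsupp.single 1 1 := by
    intro h; have := DFunLike.congr_fun h 1; simp at this
  have hne3 : (Finsupp.single (0:Fin 2) 1) ≠ Finsupp.single 1 1 := by
    intro h; have := DFunLike.congr_fun h 0; simp at this
  rw [Finset.sum_insert (by simp [hne1, hne2]), Finset.sum_insert (by simp [hne3]),
    Finset.sum_singleton]
  simp [Finsupp.prod_fintype, Fin.prod_univ_two, Finsupp.single_apply, MvPolynomial.coeff]
  ring

end StmtAux

set_option maxHeartbeats 2000000 in
/-- every zero-mean affine function is the divergence of a bubble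
field, with an `H¹`-stable choice of coefficients. -/
theorem stmt2 :
    ∃ C > (0 : ℝ), ∀ q : E2 → ℝ, IsPolyDeg 1 q → (∫ x in refT, q x) = 0 →
      ∃ a b : ℝ, (∀ x : E2, a * dphi 0 x + b * dphi 1 x = q x) ∧
        (∫ x in refT, (a ^ 2 + b ^ 2) * (phi x ^ 2 + ‖gradient phi x‖ ^ 2)) ≤
          C * ∫ x in refT, q x ^ 2 := by
  classical
  refine ⟨38, by norm_num, ?_⟩
  rintro q ⟨p, hdeg, hqp⟩ hmean0
  obtain ⟨α, β, γ, hq⟩ : ∃ α β γ : ℝ, ∀ x : E2, q x = α + β * x 0 + γ * x 1 :=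
    ⟨p.coeff 0, p.coeff (Finsupp.single 0 1), p.coeff (Finsupp.single 1 1), fun x => by
      rw [hqp x, StmtAux.affine_of_deg_le_one p hdeg]⟩
  have hmean : α/2 + β/6 + γ/6 = 0 := by
    have key : ∫ x in refT, q x = α/2 + β/6 + γ/6 := by
      rw [StmtAux.transfer q]
      simp only [hq, StmtAux.psi_apply0, StmtAux.psi_apply1]
      exact StmtAux.T2_poly1 α β γ
    rw [key] at hmean0
    exact hmean0
  have hα : α = -(β + γ)/3 := by linarith
  refine ⟨(γ - 2*β)/18, (β - 2*γ)/18, ?_, ?_⟩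
  · intro x
    rw [StmtAux.dphi0, StmtAux.dphi1, hq x, hα]
    ring
  · have hR : ∫ x in refT, q x ^ 2 = (β^2 - β*γ + γ^2)/36 := by
      rw [StmtAux.transfer (fun x => q x ^ 2)]
      simp only [hq, StmtAux.psi_apply0, StmtAux.psi_apply1]
      rw [StmtAux.T2_poly2 α β γ, hα]
      ring
    have ht : ∫ x in refT, (phi x ^ 2 + ‖gradient phi x‖ ^ 2) =
        ∫ p in StmtAux.T2, ((2 - 3*((1 - p.1 - p.2)^2 + p.1^2 + p.2^2))^2 +
          ((6 - 12*p.1 - 6*p.2)^2 + (6 - 6*p.1 - 12*p.2)^2)) := by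
      rw [StmtAux.transfer (fun x => phi x ^ 2 + ‖gradient phi x‖ ^ 2)]
      simp only [StmtAux.norm_gradient_phi_sq, phi, StmtAux.psi_apply0, StmtAux.psi_apply1]
    have hvol : (volume StmtAux.T2).toReal = 1/2 := by
      have h := StmtAux.m00
      rwa [setIntegral_const, smul_eq_mul, mul_one] at h
    have hIle : (∫ p in StmtAux.T2, ((2 - 3*((1 - p.1 - p.2)^2 + p.1^2 + p.2^2))^2 +
        ((6 - 12*p.1 - 6*p.2)^2 + (6 - 6*p.1 - 12*p.2)^2))) ≤ 38 := by
      have hconst : ∫ _ in StmtAux.T2, (76:ℝ) = 38 := by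
        rw [setIntegral_const, measureReal_def, hvol, smul_eq_mul]; norm_num
      rw [← hconst]
      apply setIntegral_mono_on (StmtAux.integrableOn_T2 _ (by fun_prop))
        (integrableOn_const StmtAux.T2_isCompact.measure_lt_top.ne)
        StmtAux.T2_measurable
      rintro ⟨u, v⟩ ⟨hu, hv, huv⟩
      simp only at hu hv huv ⊢
      have ht0 : (0:ℝ) ≤ 1 - u - v := by linarith
      have h1 : (1-u-v)^2 ≤ 1-u-v := by nlinarith
      have h2 : u^2 ≤ u := by nlinarith
      have h3 : v^2 ≤ v := by nlinarith
      have hA : (6-12*u-6*v)^2 ≤ 36 := by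
        nlinarith [mul_nonneg (show (0:ℝ) ≤ 12*u+6*v by linarith)
          (show (0:ℝ) ≤ 12-12*u-6*v by linarith)]
      have hB : (6-6*u-12*v)^2 ≤ 36 := by
        nlinarith [mul_nonneg (show (0:ℝ) ≤ 6*u+12*v by linarith)
          (show (0:ℝ) ≤ 12-6*u-12*v by linarith)]
      have hs0 : (0:ℝ) ≤ (1-u-v)^2+u^2+v^2 := by positivity
      have hs1 : (1-u-v)^2+u^2+v^2 ≤ 1 := by linarith
      have hphi2 : (2-3*((1-u-v)^2+u^2+v^2))^2 ≤ 4 := by nlinarith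
      linarith
    have hI0 : (0:ℝ) ≤ ∫ p in StmtAux.T2, ((2 - 3*((1 - p.1 - p.2)^2 + p.1^2 + p.2^2))^2 +
        ((6 - 12*p.1 - 6*p.2)^2 + (6 - 6*p.1 - 12*p.2)^2)) :=
      setIntegral_nonneg StmtAux.T2_measurable (fun p _ => by positivity)
    have hab : ((γ - 2*β)/18)^2 + ((β - 2*γ)/18)^2 ≤ ∫ x in refT, q x ^ 2 := by
      rw [hR]
      nlinarith [sq_nonneg (β + γ), sq_nonneg (β - γ)]
    have habnn : (0:ℝ) ≤ ((γ - 2*β)/18)^2 + ((β - 2*γ)/18)^2 := by positivity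
    calc ∫ x in refT, (((γ - 2*β)/18)^2 + ((β - 2*γ)/18)^2) *
          (phi x ^ 2 + ‖gradient phi x‖ ^ 2)
        = (((γ - 2*β)/18)^2 + ((β - 2*γ)/18)^2) *
          ∫ x in refT, (phi x ^ 2 + ‖gradient phi x‖ ^ 2) := integral_const_mul _ _
      _ ≤ (((γ - 2*β)/18)^2 + ((β - 2*γ)/18)^2) * 38 := by
          rw [ht]; exact mul_le_mul_of_nonneg_left hIle habnn
      _ ≤ 38 * ∫ x in refT, q x ^ 2 := by
          rw [mul_comm]; exact mul_le_mul_of_nonneg_left hab (by norm_num)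
end
end

section
/- Let F : ℝ² → ℝ² be continuously differentiable and injective on T̂ with DF(x̂) invertible for every x̂ ∈ T̂; set T = F(T̂) and A(x̂) = DF(x̂)/det DF(x̂). Let ŵ : ℝ² → ℝ² have components that are polynomials of total degree at most 2, and define w on T by w(F(x̂)) = A(x̂) ŵ(x̂). If w(F(â)) = 0 for every node â ∈ N, then ŵ = 0 identically and hence w = 0 on T; consequently, a function of the curved Fortin–Soulie local space W(T) = {x ↦ A(F⁻¹x) ŵ(F⁻¹x) : ŵ with components polynomials of total degree at most 2} is uniquely determined by its values at the six mapped nodes F(â), â ∈ N. -/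
open MeasureTheory
open scoped MeasureTheory

noncomputable section

open MvPolynomial in
lemma lag_mono (a b : ℕ) (h : a + b ≤ 2) (x y : ℝ) :
    x ^ a * y ^ b =
      ((0:ℝ) ^ a * (0:ℝ) ^ b) * ((1 - x - y) * (2 * (1 - x - y) - 1))
      + ((1:ℝ) ^ a * (0:ℝ) ^ b) * (x * (2 * x - 1))
      + ((0:ℝ) ^ a * (1:ℝ) ^ b) * (y * (2 * y - 1))
      + ((2⁻¹:ℝ) ^ a * (0:ℝ) ^ b) * (4 * x * (1 - x - y))
      + ((2⁻¹:ℝ) ^ a * (2⁻¹:ℝ) ^ b) * (4 * x * y)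
      + ((0:ℝ) ^ a * (2⁻¹:ℝ) ^ b) * (4 * y * (1 - x - y)) := by
  have ha : a ≤ 2 := le_trans (Nat.le_add_right a b) h
  interval_cases a <;> (have hb : b ≤ 2 := by omega) <;>
    interval_cases b <;> first | omega | (norm_num <;> ring)

open MvPolynomial in
lemma quad_eval (p : MvPolynomial (Fin 2) ℝ) (hp : p.totalDegree ≤ 2)
    (h1 : eval ![(0:ℝ), 0] p = 0) (h2 : eval ![(1:ℝ), 0] p = 0)
    (h3 : eval ![(0:ℝ), 1] p = 0) (h4 : eval ![(2⁻¹:ℝ), 0] p = 0)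
    (h5 : eval ![(2⁻¹:ℝ), 2⁻¹] p = 0) (h6 : eval ![(0:ℝ), 2⁻¹] p = 0)
    (v : Fin 2 → ℝ) : eval v p = 0 := by
  have key : ∀ u : Fin 2 → ℝ,
      eval u p = ∑ d ∈ p.support, coeff d p * (u 0 ^ d 0 * u 1 ^ d 1) := by
    intro u
    rw [eval_eq']
    exact Finset.sum_congr rfl fun d _ => by rw [Fin.prod_univ_two]
  have expand : eval v p =
      eval ![(0:ℝ),0] p * ((1 - v 0 - v 1) * (2 * (1 - v 0 - v 1) - 1))
      + eval ![(1:ℝ),0] p * (v 0 * (2 * v 0 - 1))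
      + eval ![(0:ℝ),1] p * (v 1 * (2 * v 1 - 1))
      + eval ![(2⁻¹:ℝ),0] p * (4 * v 0 * (1 - v 0 - v 1))
      + eval ![(2⁻¹:ℝ),2⁻¹] p * (4 * v 0 * v 1)
      + eval ![(0:ℝ),2⁻¹] p * (4 * v 1 * (1 - v 0 - v 1)) := by
    simp only [key, Finset.sum_mul, ← Finset.sum_add_distrib]
    refine Finset.sum_congr rfl fun d hd => ?_
    have hdle : d 0 + d 1 ≤ 2 := by
      have h := MvPolynomial.le_totalDegree hd
      have h' : (d.sum fun _ n => n) = ∑ i : Fin 2, d i :=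
        Finsupp.sum_fintype _ _ (fun _ => rfl)
      rw [h', Fin.sum_univ_two] at h
      omega
    simp only [Matrix.cons_val_zero, Matrix.cons_val_one, Matrix.head_cons]
    rw [lag_mono (d 0) (d 1) hdle (v 0) (v 1)]
    ring
  rw [expand, h1, h2, h3, h4, h5, h6]
  ring

lemma piola_inj {F : E2 → E2} {x : E2} (e : E2 ≃L[ℝ] E2)
    (he : (e : E2 →L[ℝ] E2) = fderiv ℝ F x) {v : E2}
    (h : piola F x v = 0) : v = 0 := by
  have hdet : jdet F x ≠ 0 := by
    rw [jdet, ← he]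
    exact (LinearEquiv.isUnit_det' e.toLinearEquiv).ne_zero
  have h2 : fderiv ℝ F x v = 0 := by
    rw [piola] at h
    simp only [ContinuousLinearMap.smul_apply, smul_eq_zero, inv_eq_zero] at h
    exact h.resolve_left hdet
  rw [← he] at h2
  exact e.injective (by simpa using h2)

/-- a function of the curved Fortin–Soulie local space `W(T)` is
uniquely determined by its values at the six mapped Lagrange nodes. -/
theorem stmt4 :
    ∀ F : E2 → E2, ContDiff ℝ 1 F → Set.InjOn F refT →
      (∀ x ∈ refT, ∃ e : E2 ≃L[ℝ] E2, (e : E2 →L[ℝ] E2) = fderiv ℝ F x) →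
      ∀ what : E2 → E2, IsPolyVec 2 what →
      ∀ w : E2 → E2, (∀ x ∈ refT, w (F x) = piola F x (what x)) →
      (∀ a ∈ nodes, w (F a) = 0) →
      (∀ x : E2, what x = 0) ∧ (∀ x ∈ refT, w (F x) = 0) := by
  intro F hF hinj hder what hwhat w hw hz
  have hmem : ∀ a ∈ nodes, a ∈ refT := by
    intro a ha
    simp only [nodes, Set.mem_insert_iff, Set.mem_singleton_iff] at ha
    rcases ha with h|h|h|h|h|h <;> subst h <;>
      simp [refT, pt, Matrix.cons_val_zero, Matrix.cons_val_one, Matrix.head_cons] <;> norm_num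
  have hwhat0 : ∀ a ∈ nodes, what a = 0 := by
    intro a ha
    obtain ⟨e, he⟩ := hder a (hmem a ha)
    refine piola_inj e he ?_
    rw [← hw a (hmem a ha)]
    exact hz a ha
  have key : ∀ a ∈ nodes, ∀ i : Fin 2, what a i = 0 := by
    intro a ha i
    rw [hwhat0 a ha]
    rfl
  have main : ∀ x : E2, what x = 0 := by
    intro x
    ext i
    obtain ⟨p, hp, hev⟩ := hwhat i
    have node_eval : ∀ a b : ℝ, pt a b ∈ nodes →
        MvPolynomial.eval ![a, b] p = 0 := by
      intro a b hab
      exact ((hev (pt a b)).symm.trans (key (pt a b) hab i))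
    have h1 := node_eval 0 0 (by simp [nodes])
    have h2 := node_eval 1 0 (by simp [nodes])
    have h3 := node_eval 0 1 (by simp [nodes])
    have h4 := node_eval 2⁻¹ 0 (by norm_num [nodes])
    have h5 := node_eval 2⁻¹ 2⁻¹ (by norm_num [nodes])
    have h6 := node_eval 0 2⁻¹ (by norm_num [nodes])
    exact (hev x).trans (quad_eval p hp h1 h2 h3 h4 h5 h6 (fun j => x j))
  refine ⟨main, fun x hx => ?_⟩
  rw [hw x hx, main x]
  simp
end
end

section
/- The restriction of the bubble φ to each edge of T̂ is L²-orthogonal to affine functions and vanishes exactly at the two Gauss–Legendre points of that edge: for every edge ê of T̂, (i) ∫_ê φ q dH¹ = 0 for every polynomial q : ℝ² → ℝ of total degree at most 1, and (ii) for x ∈ ê one has φ(x) = 0 if and only if x is one of the two Gauss–Legendre points of ê. -/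
open MeasureTheory
open scoped MeasureTheory

noncomputable section

section Stmt8Aux

lemma restrict_segment' (P Q : E2) :
    μH[1].restrict (segment ℝ P Q) =
      (nndist P Q) • Measure.map (fun t : ℝ => P + t • (Q - P)) (volume.restrict (Set.Icc 0 1)) := by
  set L : ℝ → E2 := fun t => P + t • (Q - P) with hLdef
  have hL : L = ⇑(AffineMap.lineMap P Q) := by
    funext t
    simp [hLdef, AffineMap.lineMap_apply_module']
    abel
  have hmeas : Measurable L := by
    rw [hL]; exact (AffineMap.lineMap_continuous).measurable
  ext A hA
  rw [Measure.restrict_apply hA, Measure.smul_apply, Measure.map_apply hmeas hA,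
    Measure.restrict_apply (hmeas hA)]
  have h1 : A ∩ segment ℝ P Q = L '' (Set.Icc 0 1 ∩ L ⁻¹' A) := by
    rw [Set.image_inter_preimage, ← segment_eq_image' ℝ P Q, Set.inter_comm]
  rw [h1, hL, hausdorffMeasure_lineMap_image, hausdorffMeasure_real, ← hL, Set.inter_comm]

lemma integral_segment' (P Q : E2) (f : E2 → ℝ) (hf : Continuous f) :
    ∫ x in segment ℝ P Q, f x ∂(μH[1]) =
      dist P Q * ∫ t in Set.Icc (0:ℝ) 1, f (P + t • (Q - P)) := by
  have hmeas : Measurable fun t : ℝ => P + t • (Q - P) := by fun_prop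
  rw [restrict_segment', integral_smul_nnreal_measure,
    integral_map hmeas.aemeasurable (hf.aestronglyMeasurable)]
  rw [NNReal.smul_def, smul_eq_mul, dist_nndist]

lemma eval_degle1' (p : MvPolynomial (Fin 2) ℝ) (hp : p.totalDegree ≤ 1) (v : Fin 2 → ℝ) :
    MvPolynomial.eval v p = MvPolynomial.coeff 0 p
      + MvPolynomial.coeff (Finsupp.single 0 1) p * v 0
      + MvPolynomial.coeff (Finsupp.single 1 1) p * v 1 := by
  classical
  have h01 : (Finsupp.single (0:Fin 2) 1 : Fin 2 →₀ ℕ) ≠ Finsupp.single 1 1 := by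
    intro h; have := DFunLike.congr_fun h 0; simp [Finsupp.single_apply] at this
  have h00 : (0 : Fin 2 →₀ ℕ) ≠ Finsupp.single 0 1 := by
    intro h; have := DFunLike.congr_fun h 0; simp [Finsupp.single_apply] at this
  have h11 : (0 : Fin 2 →₀ ℕ) ≠ Finsupp.single 1 1 := by
    intro h; have := DFunLike.congr_fun h 1; simp [Finsupp.single_apply] at this
  rw [MvPolynomial.eval_eq']
  have hsub : p.support ⊆ ({0, Finsupp.single 0 1, Finsupp.single 1 1} : Finset (Fin 2 →₀ ℕ)) := by
    intro d hd
    have hdeg : (d.sum fun _ e => e) ≤ 1 := le_trans (MvPolynomial.le_totalDegree hd) hp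
    have hsum : d 0 + d 1 ≤ 1 := by
      rwa [Finsupp.sum_fintype _ _ (fun _ => rfl), Fin.sum_univ_two] at hdeg
    have hcase : (d 0 = 0 ∧ d 1 = 0) ∨ (d 0 = 1 ∧ d 1 = 0) ∨ (d 0 = 0 ∧ d 1 = 1) := by omega
    simp only [Finset.mem_insert, Finset.mem_singleton]
    rcases hcase with ⟨ha, hb⟩ | ⟨ha, hb⟩ | ⟨ha, hb⟩
    · left; ext i; fin_cases i <;> simpa
    · right; left; ext i; fin_cases i <;> simp [Finsupp.single_apply, ha, hb]
    · right; right; ext i; fin_cases i <;> simp [Finsupp.single_apply, ha, hb]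
  rw [Finset.sum_subset hsub (fun d _ hd => by
    rw [MvPolynomial.notMem_support_iff.mp hd, zero_mul])]
  rw [Finset.sum_insert (by simp [h00, h11]), Finset.sum_insert (by simp [h01]),
    Finset.sum_singleton]
  simp [Fin.prod_univ_two, Finsupp.single_apply]
  ring

lemma key_int (α β : ℝ) :
    ∫ t in (0:ℝ)..1, (-1 + 6*t - 6*t^2) * (α + β*t) = 0 := by
  have h : ∀ t ∈ Set.uIcc (0:ℝ) 1, HasDerivAt
      (fun t : ℝ => α*(3*t^2 - 2*t^3 - t) + β*(2*t^3 - (3/2)*t^4 - t^2/2))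
      ((-1 + 6*t - 6*t^2) * (α + β*t)) t := by
    intro t _
    have h1 : HasDerivAt (fun t : ℝ => 3*t^2 - 2*t^3 - t) (3*(2*t) - 2*(3*t^2) - 1) t := by
      exact ((((hasDerivAt_pow 2 t).const_mul 3).sub
        ((hasDerivAt_pow 3 t).const_mul 2)).sub (hasDerivAt_id t)).congr_deriv (by norm_num)
    have h2 : HasDerivAt (fun t : ℝ => 2*t^3 - (3/2)*t^4 - t^2/2)
        (2*(3*t^2) - (3/2)*(4*t^3) - (2*t)/2) t := by
      exact ((((hasDerivAt_pow 3 t).const_mul 2).sub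
        ((hasDerivAt_pow 4 t).const_mul (3/2))).sub ((hasDerivAt_pow 2 t).div_const 2)).congr_deriv (by norm_num)
    have := (h1.const_mul α).add (h2.const_mul β)
    refine this.congr_deriv ?_
    ring
  rw [intervalIntegral.integral_eq_sub_of_hasDerivAt h
    ((Continuous.intervalIntegrable (by fun_prop) _ _))]
  norm_num

lemma cont_coord' (i : Fin 2) : Continuous fun x : E2 => x i := by fun_prop

lemma cont_phi' : Continuous phi := by
  unfold phi
  exact continuous_const.sub
    (continuous_const.mul (((((continuous_const.sub (cont_coord' 0)).sub (cont_coord' 1)).pow 2).add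
      ((cont_coord' 0).pow 2)).add ((cont_coord' 1).pow 2)))

lemma coord0' (A B C D t : ℝ) : (pt A B + t • (pt C D - pt A B)) 0 = A + t * (C - A) := by
  simp [pt, PiLp.add_apply, PiLp.smul_apply, PiLp.sub_apply]
lemma coord1' (A B C D t : ℝ) : (pt A B + t • (pt C D - pt A B)) 1 = B + t * (D - B) := by
  simp [pt, PiLp.add_apply, PiLp.smul_apply, PiLp.sub_apply]

lemma phi_line' (A B C D t : ℝ) : phi (pt A B + t • (pt C D - pt A B)) =
    2 - 3 * ((1 - (A + t*(C-A)) - (B + t*(D-B)))^2 + (A + t*(C-A))^2 + (B + t*(D-B))^2) := by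
  unfold phi; rw [coord0', coord1']

lemma edge_int' (A B C D : ℝ)
    (hphi : ∀ t : ℝ, phi (pt A B + t • (pt C D - pt A B)) = -1 + 6*t - 6*t^2) :
    ∀ q : E2 → ℝ, IsPolyDeg 1 q →
      (∫ x in segment ℝ (pt A B) (pt C D), phi x * q x ∂(μH[1])) = 0 := by
  rintro q ⟨p, hp, hq⟩
  set c := MvPolynomial.coeff 0 p with hc
  set a := MvPolynomial.coeff (Finsupp.single 0 1) p with ha
  set b := MvPolynomial.coeff (Finsupp.single 1 1) p with hb
  have hq' : ∀ x : E2, q x = c + a * x 0 + b * x 1 := fun x => by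
    rw [hq x]; exact eval_degle1' p hp _
  have hcont : Continuous fun x : E2 => phi x * q x := by
    have he : (fun x : E2 => phi x * q x) = fun x : E2 => phi x * (c + a * x 0 + b * x 1) :=
      funext fun x => by rw [hq' x]
    rw [he]
    exact cont_phi'.mul ((continuous_const.add (continuous_const.mul (cont_coord' 0))).add
      (continuous_const.mul (cont_coord' 1)))
  rw [integral_segment' _ _ _ hcont]
  have hval : ∀ t : ℝ,
      phi (pt A B + t • (pt C D - pt A B)) * q (pt A B + t • (pt C D - pt A B))
        = (-1 + 6*t - 6*t^2) * ((c + a*A + b*B) + (a*(C-A) + b*(D-B))*t) := by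
    intro t
    rw [hphi t, hq', coord0', coord1']; ring
  simp only [hval]
  rw [MeasureTheory.integral_Icc_eq_integral_Ioc, ← intervalIntegral.integral_of_le zero_le_one,
    key_int]
  ring

lemma edge_zero' (A B C D : ℝ) (hne : pt C D - pt A B ≠ 0)
    (hphi : ∀ t : ℝ, phi (pt A B + t • (pt C D - pt A B)) = -1 + 6*t - 6*t^2) :
    ∀ x ∈ segment ℝ (pt A B) (pt C D), (phi x = 0 ↔
        x = pt A B + ((3 - Real.sqrt 3) / 6) • (pt C D - pt A B) ∨
        x = pt A B + ((3 + Real.sqrt 3) / 6) • (pt C D - pt A B)) := by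
  have h3 : Real.sqrt 3 ^ 2 = 3 := Real.sq_sqrt (by norm_num)
  intro x hx
  rw [segment_eq_image'] at hx
  obtain ⟨t, ht, rfl⟩ := hx
  have hfac : ∀ s : ℝ,
      (pt A B + t • (pt C D - pt A B) = pt A B + s • (pt C D - pt A B)) ↔ t = s := by
    intro s
    constructor
    · intro h; exact smul_left_injective ℝ hne (add_left_cancel h)
    · rintro rfl; rfl
  rw [hfac, hfac, hphi t]
  constructor
  · intro h
    have hprod : (t - (3 - Real.sqrt 3)/6) * (t - (3 + Real.sqrt 3)/6) = 0 := by
      linear_combination (-1/6 : ℝ) * h - (1/36 : ℝ) * h3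
    rcases mul_eq_zero.mp hprod with h' | h'
    · exact Or.inl (sub_eq_zero.mp h')
    · exact Or.inr (sub_eq_zero.mp h')
  · rintro (rfl | rfl) <;> linear_combination (-1/6 : ℝ) * h3

end Stmt8Aux

/-- on each edge of the reference triangle, the bubble `φ` is
`L²`-orthogonal to affine functions and vanishes exactly at the two
Gauss–Legendre points of the edge. -/
theorem stmt8 :
    ∀ P Q : E2, IsEdgePair P Q →
      (∀ q : E2 → ℝ, IsPolyDeg 1 q →
          (∫ x in segment ℝ P Q, phi x * q x ∂(μH[1])) = 0) ∧
      (∀ x ∈ segment ℝ P Q, (phi x = 0 ↔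
        x = P + ((3 - Real.sqrt 3) / 6) • (Q - P) ∨
        x = P + ((3 + Real.sqrt 3) / 6) • (Q - P))) := by
  intro P Q hPQ
  rcases hPQ with ⟨hP, hQ⟩ | ⟨hP, hQ⟩ | ⟨hP, hQ⟩ <;> subst hP <;> subst hQ
  · refine ⟨edge_int' 0 0 1 0 ?hphi, edge_zero' 0 0 1 0 ?hne ?hphi⟩
    case hne =>
      intro h
      have h0 : (pt 1 0 - pt 0 0 : E2) 0 = 0 := by rw [h]; rfl
      simp [pt, PiLp.sub_apply] at h0
    case hphi => intro t; rw [phi_line']; ring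
  · refine ⟨edge_int' 0 0 0 1 ?hphi, edge_zero' 0 0 0 1 ?hne ?hphi⟩
    case hne =>
      intro h
      have h0 : (pt 0 1 - pt 0 0 : E2) 1 = 0 := by rw [h]; rfl
      simp [pt, PiLp.sub_apply] at h0
    case hphi => intro t; rw [phi_line']; ring
  · refine ⟨edge_int' 1 0 0 1 ?hphi, edge_zero' 1 0 0 1 ?hne ?hphi⟩
    case hne =>
      intro h
      have h0 : (pt 0 1 - pt 1 0 : E2) 1 = 0 := by rw [h]; rfl
      simp [pt, PiLp.sub_apply] at h0
    case hphi => intro t; rw [phi_line']; ring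
end
end

section
/- For every K ≥ 1 there exists a constant C > 0 such that for every h ∈ (0,1], every (K,h)-admissible map F and all a, b ∈ ℝ, the fields on T defined by φ_T(F(x̂)) = A(x̂)·(a φ(x̂), b φ(x̂)) and φ'_T(F(x̂)) = A(b̂)·(a φ(x̂), b φ(x̂)), where b̂ = (1/3, 1/3) is the barycenter of T̂, satisfy (∫_T ‖φ_T − φ'_T‖²)^{1/2} ≤ C h (∫_T ‖φ_T‖²)^{1/2} and (∫_{int T} ‖D(φ_T − φ'_T)(x)‖² dx)^{1/2} ≤ C (∫_T ‖φ_T‖²)^{1/2}, where D denotes the Jacobian matrix. -/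
open MeasureTheory
open scoped MeasureTheory

noncomputable section

namespace S11
open Metric Set



lemma coord_le_norm (v : E2) (i : Fin 2) : |v i| ≤ ‖v‖ := by
  rw [EuclideanSpace.norm_eq]
  rw [show |v i| = Real.sqrt ((v i)^2) by rw [Real.sqrt_sq_eq_abs]]
  apply Real.sqrt_le_sqrt
  fin_cases i <;> simp [Fin.sum_univ_two, sq_abs] <;>
    nlinarith [sq_nonneg (v 0), sq_nonneg (v 1)]

lemma pt_apply_zero (a b : ℝ) : pt a b 0 = a := rfl
lemma pt_apply_one (a b : ℝ) : pt a b 1 = b := rfl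

lemma norm_pt (a b : ℝ) : ‖pt a b‖ = Real.sqrt (a^2 + b^2) := by
  rw [EuclideanSpace.norm_eq, Fin.sum_univ_two]
  simp [pt_apply_zero, pt_apply_one, sq_abs]

lemma convex_refT : Convex ℝ refT := by
  have : refT = {x : E2 | 0 ≤ x 0} ∩ ({x : E2 | 0 ≤ x 1} ∩ {x : E2 | x 0 + x 1 ≤ 1}) := by
    ext x; simp [refT, and_assoc]
  rw [this]
  refine (convex_halfSpace_ge ?_ 0).inter ((convex_halfSpace_ge ?_ 0).inter
    (convex_halfSpace_le ?_ 1)) <;>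
  · constructor <;> intros <;> simp [PiLp.add_apply, PiLp.smul_apply] <;> ring

lemma isClosed_refT : IsClosed refT := by
  have h0 : Continuous fun x : E2 => x 0 := (EuclideanSpace.proj (0 : Fin 2)).continuous
  have h1 : Continuous fun x : E2 => x 1 := (EuclideanSpace.proj (1 : Fin 2)).continuous
  exact (isClosed_le continuous_const h0).inter ((isClosed_le continuous_const h1).inter
    (isClosed_le (h0.add h1) continuous_const))

lemma measurableSet_refT : MeasurableSet refT := isClosed_refT.measurableSet

lemma mem_refT_bounds {x : E2} (hx : x ∈ refT) :
    0 ≤ x 0 ∧ x 0 ≤ 1 ∧ 0 ≤ x 1 ∧ x 1 ≤ 1 := by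
  obtain ⟨h0, h1, h2⟩ := hx
  exact ⟨h0, by linarith, h1, by linarith⟩

lemma norm_le_of_mem_refT {x : E2} (hx : x ∈ refT) : ‖x‖ ≤ 2 := by
  obtain ⟨h0, h1, h2, h3⟩ := mem_refT_bounds hx
  rw [EuclideanSpace.norm_eq, Fin.sum_univ_two]
  calc Real.sqrt (‖x 0‖^2 + ‖x 1‖^2) ≤ Real.sqrt (2^2) := by
        apply Real.sqrt_le_sqrt
        simp only [Real.norm_eq_abs, sq_abs]
        nlinarith
    _ = 2 := by rw [Real.sqrt_sq]; norm_num

lemma dist_le_of_mem_refT {x y : E2} (hx : x ∈ refT) (hy : y ∈ refT) : ‖x - y‖ ≤ 4 := by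
  calc ‖x - y‖ ≤ ‖x‖ + ‖y‖ := norm_sub_le _ _
    _ ≤ 4 := by linarith [norm_le_of_mem_refT hx, norm_le_of_mem_refT hy]

lemma isCompact_refT : IsCompact refT := by
  apply Metric.isCompact_of_isClosed_isBounded isClosed_refT
  exact isBounded_iff_forall_norm_le.mpr ⟨2, fun x hx => norm_le_of_mem_refT hx⟩

lemma bary_mem_refT : pt (1/3) (1/3) ∈ refT := by
  constructor
  · rw [pt_apply_zero]; norm_num
  constructor
  · rw [pt_apply_one]; norm_num
  · rw [pt_apply_zero, pt_apply_one]; norm_num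

lemma abs_phi_le {x : E2} (hx : x ∈ refT) : |phi x| ≤ 11 := by
  obtain ⟨h0, h1, h2, h3⟩ := mem_refT_bounds hx
  rw [abs_le]; unfold phi; constructor <;> nlinarith

lemma phi_lipschitz {x y : E2} (hx : x ∈ refT) (hy : y ∈ refT) :
    |phi x - phi y| ≤ 24 * ‖x - y‖ := by
  obtain ⟨hx0, hx1, hx2, hx3⟩ := mem_refT_bounds hx
  obtain ⟨hy0, hy1, hy2, hy3⟩ := mem_refT_bounds hy
  have e0 : |x 0 - y 0| ≤ ‖x - y‖ := by
    have := coord_le_norm (x - y) 0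
    simpa using this
  have e1 : |x 1 - y 1| ≤ ‖x - y‖ := by
    have := coord_le_norm (x - y) 1
    simpa using this
  have h0 := abs_le.mp (le_refl |x 0 - y 0|)
  unfold phi
  have key : ∀ a b : ℝ, |a| ≤ 1 → |b| ≤ 1 → |a^2 - b^2| ≤ 2 * |a - b| := by
    intro a b ha hb
    have : a^2 - b^2 = (a+b)*(a-b) := by ring
    rw [this, abs_mul]
    have : |a + b| ≤ 2 := by
      calc |a+b| ≤ |a| + |b| := abs_add_le _ _
        _ ≤ 2 := by linarith
    nlinarith [abs_nonneg (a - b)]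
  have k1 := key (1 - x 0 - x 1) (1 - y 0 - y 1) (by rw [abs_le]; constructor <;> linarith)
      (by rw [abs_le]; constructor <;> linarith)
  have k2 := key (x 0) (y 0) (by rw [abs_le]; constructor <;> linarith)
      (by rw [abs_le]; constructor <;> linarith)
  have k3 := key (x 1) (y 1) (by rw [abs_le]; constructor <;> linarith)
      (by rw [abs_le]; constructor <;> linarith)
  have t1 : |(1 - x 0 - x 1) - (1 - y 0 - y 1)| ≤ |x 0 - y 0| + |x 1 - y 1| := by
    rw [show (1 - x 0 - x 1) - (1 - y 0 - y 1) = -((x 0 - y 0) + (x 1 - y 1)) by ring, abs_neg]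
    exact abs_add_le _ _
  calc |(2 - 3*((1 - x 0 - x 1)^2 + x 0^2 + x 1^2)) - (2 - 3*((1 - y 0 - y 1)^2 + y 0^2 + y 1^2))|
      = 3 * |((1 - x 0 - x 1)^2 - (1 - y 0 - y 1)^2) + ((x 0^2 - y 0^2) + (x 1^2 - y 1^2))| := by
        rw [show (2 - 3*((1 - x 0 - x 1)^2 + x 0^2 + x 1^2)) - (2 - 3*((1 - y 0 - y 1)^2 + y 0^2 + y 1^2))
          = -(3 * (((1 - x 0 - x 1)^2 - (1 - y 0 - y 1)^2) + ((x 0^2 - y 0^2) + (x 1^2 - y 1^2)))) by ring,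
          abs_neg, abs_mul]
        norm_num
    _ ≤ 3 * (|(1 - x 0 - x 1)^2 - (1 - y 0 - y 1)^2| + (|x 0^2 - y 0^2| + |x 1^2 - y 1^2|)) := by
        have := abs_add_le ((1 - x 0 - x 1)^2 - (1 - y 0 - y 1)^2) ((x 0^2 - y 0^2) + (x 1^2 - y 1^2))
        have := abs_add_le (x 0^2 - y 0^2) (x 1^2 - y 1^2)
        nlinarith [abs_nonneg ((1 - x 0 - x 1)^2 - (1 - y 0 - y 1)^2)]
    _ ≤ 24 * ‖x - y‖ := by nlinarith [norm_nonneg (x - y), abs_nonneg (x 0 - y 0), abs_nonneg (x 1 - y 1)]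



lemma contDiff_eval (p : MvPolynomial (Fin 2) ℝ) :
    ContDiff ℝ (⊤ : ℕ∞) (fun x : E2 => MvPolynomial.eval (fun i => x i) p) := by
  induction p using MvPolynomial.induction_on with
  | C a => simpa using contDiff_const
  | add p q hp hq => simpa [MvPolynomial.eval_add] using hp.add hq
  | mul_X p i hp =>
      simp only [MvPolynomial.eval_mul, MvPolynomial.eval_X]
      exact hp.mul (by exact (EuclideanSpace.proj i : E2 →L[ℝ] ℝ).contDiff)

lemma contDiff_of_polyVec {F : E2 → E2} (hF : IsPolyVec 2 F) : ContDiff ℝ (⊤ : ℕ∞) F := by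
  rw [contDiff_euclidean]
  intro i
  obtain ⟨p, -, hp⟩ := hF i
  have h2 := contDiff_eval p
  have he : (fun x : E2 => F x i) = fun x => MvPolynomial.eval (fun i => x i) p := funext hp
  rw [he]; exact h2

/-- The entry `i j` of a continuous linear map on `E2`. -/
def ent (i j : Fin 2) (T : E2 →L[ℝ] E2) : ℝ := T (EuclideanSpace.single j 1) i

lemma abs_ent_le (i j : Fin 2) (T : E2 →L[ℝ] E2) : |ent i j T| ≤ ‖T‖ := by
  calc |ent i j T| ≤ ‖T (EuclideanSpace.single j 1)‖ := coord_le_norm _ i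
    _ ≤ ‖T‖ * ‖(EuclideanSpace.single j (1:ℝ))‖ := T.le_opNorm _
    _ = ‖T‖ := by simp [EuclideanSpace.norm_single]

lemma det_eq_ent (T : E2 →L[ℝ] E2) :
    LinearMap.det (T : E2 →ₗ[ℝ] E2) = ent 0 0 T * ent 1 1 T - ent 0 1 T * ent 1 0 T := by
  classical
  have hm : ∀ i j, (LinearMap.toMatrix (EuclideanSpace.basisFun (Fin 2) ℝ).toBasis
      (EuclideanSpace.basisFun (Fin 2) ℝ).toBasis (T : E2 →ₗ[ℝ] E2)) i j = ent i j T := by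
    intro i j
    rw [LinearMap.toMatrix_apply]
    simp [OrthonormalBasis.coe_toBasis_repr_apply, OrthonormalBasis.coe_toBasis,
      EuclideanSpace.basisFun_apply, EuclideanSpace.basisFun_repr, ent]
  rw [← LinearMap.det_toMatrix (EuclideanSpace.basisFun (Fin 2) ℝ).toBasis, Matrix.det_fin_two,
    hm, hm, hm, hm]

lemma abs_det_sub_det (T S : E2 →L[ℝ] E2) {a b : ℝ}
    (hT : ‖T‖ ≤ a) (hS : ‖S‖ ≤ a) (hTS : ‖T - S‖ ≤ b) (ha : 0 ≤ a) :
    |LinearMap.det (T : E2 →ₗ[ℝ] E2) - LinearMap.det (S : E2 →ₗ[ℝ] E2)| ≤ 4 * a * b := by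
  rw [det_eq_ent, det_eq_ent]
  have hent : ∀ i j, |ent i j T - ent i j S| ≤ b := by
    intro i j
    have : ent i j T - ent i j S = ent i j (T - S) := by simp [ent]
    rw [this]; exact le_trans (abs_ent_le _ _ _) hTS
  have h1 : ∀ i j, |ent i j T| ≤ a := fun i j => le_trans (abs_ent_le i j T) hT
  have h2 : ∀ i j, |ent i j S| ≤ a := fun i j => le_trans (abs_ent_le i j S) hS
  have key : ∀ p q r s : ℝ, |p| ≤ a → |s| ≤ a → |p - q| ≤ b → |r - s| ≤ b →
      |p * r - q * s| ≤ 2 * a * b := by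
    intro p q r s hp hs hpq hrs
    have : p * r - q * s = p * (r - s) + (p - q) * s := by ring
    rw [this]
    calc |p * (r - s) + (p - q) * s| ≤ |p * (r - s)| + |(p - q) * s| := abs_add_le _ _
      _ = |p| * |r - s| + |p - q| * |s| := by rw [abs_mul, abs_mul]
      _ ≤ 2 * a * b := by
          have hb : 0 ≤ b := le_trans (abs_nonneg _) hpq
          nlinarith [abs_nonneg p, abs_nonneg s, abs_nonneg (r - s), abs_nonneg (p - q)]
  have k1 := key (ent 0 0 T) (ent 0 0 S) (ent 1 1 T) (ent 1 1 S)
    (h1 0 0) (h2 1 1) (hent 0 0) (hent 1 1)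
  have k2 := key (ent 0 1 T) (ent 0 1 S) (ent 1 0 T) (ent 1 0 S)
    (h1 0 1) (h2 1 0) (hent 0 1) (hent 1 0)
  calc |ent 0 0 T * ent 1 1 T - ent 0 1 T * ent 1 0 T -
        (ent 0 0 S * ent 1 1 S - ent 0 1 S * ent 1 0 S)|
      ≤ |ent 0 0 T * ent 1 1 T - ent 0 0 S * ent 1 1 S| +
        |ent 0 1 T * ent 1 0 T - ent 0 1 S * ent 1 0 S| := by
        rw [show ent 0 0 T * ent 1 1 T - ent 0 1 T * ent 1 0 T -
          (ent 0 0 S * ent 1 1 S - ent 0 1 S * ent 1 0 S) =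
          (ent 0 0 T * ent 1 1 T - ent 0 0 S * ent 1 1 S) -
          (ent 0 1 T * ent 1 0 T - ent 0 1 S * ent 1 0 S) by ring]
        exact abs_sub _ _
    _ ≤ 4 * a * b := by linarith



variable {K h : ℝ} {F : E2 → E2}

lemma diff_fderiv (hsm : ContDiff ℝ (⊤ : ℕ∞) F) : Differentiable ℝ (fderiv ℝ F) :=
  (contDiff_infty_iff_fderiv.mp hsm).2.differentiable (by simp)

lemma DF_bound (hF : IsAdmissible K h F) {x : E2} (hx : x ∈ refT) :
    ‖fderiv ℝ F x‖ ≤ K * h := by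
  obtain ⟨e, he, h1, -⟩ := hF.2.2 x hx
  rw [← he]; exact h1

lemma D2F_bound (hF : IsAdmissible K h F) {x : E2} (hx : x ∈ refT) :
    ‖fderiv ℝ (fderiv ℝ F) x‖ ≤ K * h ^ 2 :=
  (hF.2.2 x hx).choose_spec.2.2.2.1

lemma jdet_lb (hF : IsAdmissible K h F) {x : E2} (hx : x ∈ refT) :
    K⁻¹ * h ^ 2 ≤ jdet F x :=
  (hF.2.2 x hx).choose_spec.2.2.2.2.1

lemma jdet_ub (hF : IsAdmissible K h F) {x : E2} (hx : x ∈ refT) :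
    jdet F x ≤ K * h ^ 2 :=
  (hF.2.2 x hx).choose_spec.2.2.2.2.2

lemma jdet_pos (hK : 1 ≤ K) (hh : 0 < h) (hF : IsAdmissible K h F) {x : E2} (hx : x ∈ refT) :
    0 < jdet F x :=
  lt_of_lt_of_le (by positivity) (jdet_lb hF hx)

lemma DF_lower (hK : 1 ≤ K) (hh : 0 < h) (hF : IsAdmissible K h F) {x : E2} (hx : x ∈ refT)
    (v : E2) : ‖v‖ ≤ (K / h) * ‖fderiv ℝ F x v‖ := by
  obtain ⟨e, he, -, h2, -⟩ := hF.2.2 x hx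
  have : v = e.symm (e v) := (e.symm_apply_apply v).symm
  calc ‖v‖ = ‖e.symm (e v)‖ := by rw [← this]
    _ ≤ ‖(e.symm : E2 →L[ℝ] E2)‖ * ‖e v‖ := (e.symm : E2 →L[ℝ] E2).le_opNorm _
    _ ≤ (K * h⁻¹) * ‖e v‖ := by
        apply mul_le_mul_of_nonneg_right h2 (norm_nonneg _)
    _ = (K / h) * ‖fderiv ℝ F x v‖ := by
        rw [div_eq_mul_inv]
        congr 2
        rw [show (e : E2 → E2) v = (e : E2 →L[ℝ] E2) v from rfl, he]

lemma DF_lip (hF : IsAdmissible K h F) (hsm : ContDiff ℝ (⊤ : ℕ∞) F)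
    {x y : E2} (hx : x ∈ refT) (hy : y ∈ refT) :
    ‖fderiv ℝ F x - fderiv ℝ F y‖ ≤ (K * h ^ 2) * ‖x - y‖ :=
  Convex.norm_image_sub_le_of_norm_fderiv_le
    (fun z _ => (diff_fderiv hsm).differentiableAt)
    (fun z hz => D2F_bound hF hz) convex_refT hy hx

lemma jdet_lip (hK : 1 ≤ K) (hh : 0 < h) (hF : IsAdmissible K h F)
    (hsm : ContDiff ℝ (⊤ : ℕ∞) F) {x y : E2} (hx : x ∈ refT) (hy : y ∈ refT) :
    |jdet F x - jdet F y| ≤ (4 * K ^ 2 * h ^ 3) * ‖x - y‖ := by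
  have := abs_det_sub_det (fderiv ℝ F x) (fderiv ℝ F y)
    (DF_bound hF hx) (DF_bound hF hy) (DF_lip hF hsm hx hy)
    (by positivity : (0:ℝ) ≤ K * h)
  calc |jdet F x - jdet F y| ≤ 4 * (K * h) * ((K * h ^ 2) * ‖x - y‖) := this
    _ = (4 * K ^ 2 * h ^ 3) * ‖x - y‖ := by ring

lemma piola_norm_le (hK : 1 ≤ K) (hh : 0 < h) (hF : IsAdmissible K h F) {x : E2}
    (hx : x ∈ refT) : ‖piola F x‖ ≤ K ^ 2 / h := by
  have hj := jdet_pos hK hh hF hx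
  have hlb := jdet_lb hF hx
  rw [piola]
  have hns : ‖((jdet F x)⁻¹ : ℝ) • fderiv ℝ F x‖ = |(jdet F x)⁻¹| * ‖fderiv ℝ F x‖ :=
    norm_smul _ _
  rw [hns, abs_inv, abs_of_pos hj]
  have h1 : (jdet F x)⁻¹ ≤ (K⁻¹ * h ^ 2)⁻¹ := by
    apply inv_anti₀ (by positivity) hlb
  have h2 : (K⁻¹ * h ^ 2)⁻¹ = K / h ^ 2 := by field_simp
  calc (jdet F x)⁻¹ * ‖fderiv ℝ F x‖ ≤ (K / h ^ 2) * (K * h) := by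
        apply mul_le_mul (h2 ▸ h1) (DF_bound hF hx) (norm_nonneg _) (by positivity)
    _ = K ^ 2 / h := by field_simp

lemma piola_lower (hK : 1 ≤ K) (hh : 0 < h) (hF : IsAdmissible K h F) {x : E2}
    (hx : x ∈ refT) (v : E2) : ‖v‖ ≤ (K ^ 2 * h) * ‖piola F x v‖ := by
  have hj := jdet_pos hK hh hF hx
  have hub := jdet_ub hF hx
  have hDv : ‖fderiv ℝ F x v‖ = jdet F x * ‖piola F x v‖ := by
    rw [show piola F x v = (jdet F x)⁻¹ • (fderiv ℝ F x v) from rfl, norm_smul,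
      Real.norm_eq_abs, abs_inv, abs_of_pos hj]
    field_simp
  calc ‖v‖ ≤ (K / h) * ‖fderiv ℝ F x v‖ := DF_lower hK hh hF hx v
    _ = (K / h) * (jdet F x * ‖piola F x v‖) := by rw [hDv]
    _ ≤ (K / h) * ((K * h ^ 2) * ‖piola F x v‖) := by
        apply mul_le_mul_of_nonneg_left _ (by positivity)
        exact mul_le_mul_of_nonneg_right hub (norm_nonneg _)
    _ = (K ^ 2 * h) * ‖piola F x v‖ := by field_simp

lemma piola_lip (hK : 1 ≤ K) (hh : 0 < h) (hF : IsAdmissible K h F)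
    (hsm : ContDiff ℝ (⊤ : ℕ∞) F) {x y : E2} (hx : x ∈ refT) (hy : y ∈ refT) :
    ‖piola F x - piola F y‖ ≤ (5 * K ^ 5) * ‖x - y‖ := by
  have hjx := jdet_pos hK hh hF hx
  have hjy := jdet_pos hK hh hF hy
  have hlbx := jdet_lb hF hx
  have hlby := jdet_lb hF hy
  have hinvx : (jdet F x)⁻¹ ≤ K / h ^ 2 := by
    rw [show K / h ^ 2 = (K⁻¹ * h ^ 2)⁻¹ by field_simp]
    exact inv_anti₀ (by positivity) hlbx
  have hinvy : (jdet F y)⁻¹ ≤ K / h ^ 2 := by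
    rw [show K / h ^ 2 = (K⁻¹ * h ^ 2)⁻¹ by field_simp]
    exact inv_anti₀ (by positivity) hlby
  have split : piola F x - piola F y =
      (jdet F x)⁻¹ • (fderiv ℝ F x - fderiv ℝ F y) +
      ((jdet F x)⁻¹ - (jdet F y)⁻¹) • fderiv ℝ F y := by
    rw [piola, piola]; module
  rw [split]
  have t1 : ‖(jdet F x)⁻¹ • (fderiv ℝ F x - fderiv ℝ F y)‖ ≤
      (K / h ^ 2) * ((K * h ^ 2) * ‖x - y‖) := by
    rw [norm_smul, Real.norm_eq_abs, abs_inv, abs_of_pos hjx]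
    apply mul_le_mul hinvx (DF_lip hF hsm hx hy) (norm_nonneg _) (by positivity)
  have t2 : ‖((jdet F x)⁻¹ - (jdet F y)⁻¹) • fderiv ℝ F y‖ ≤
      ((4 * K ^ 2 * h ^ 3) * ‖x - y‖ * (K / h ^ 2) * (K / h ^ 2)) * (K * h) := by
    rw [norm_smul, Real.norm_eq_abs]
    apply mul_le_mul _ (DF_bound hF hy) (norm_nonneg _) (by positivity)
    have : (jdet F x)⁻¹ - (jdet F y)⁻¹ = (jdet F y - jdet F x) * ((jdet F x)⁻¹ * (jdet F y)⁻¹) := by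
      field_simp
    rw [this, abs_mul, abs_mul, abs_inv, abs_inv, abs_of_pos hjx, abs_of_pos hjy]
    have h1 : |jdet F y - jdet F x| ≤ (4 * K ^ 2 * h ^ 3) * ‖x - y‖ := by
      rw [abs_sub_comm]; exact jdet_lip hK hh hF hsm hx hy
    calc |jdet F y - jdet F x| * ((jdet F x)⁻¹ * (jdet F y)⁻¹)
        ≤ ((4 * K ^ 2 * h ^ 3) * ‖x - y‖) * ((K / h ^ 2) * (K / h ^ 2)) := by
          apply mul_le_mul h1 _ (by positivity) (by positivity)
          exact mul_le_mul hinvx hinvy (by positivity) (by positivity)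
      _ = (4 * K ^ 2 * h ^ 3) * ‖x - y‖ * (K / h ^ 2) * (K / h ^ 2) := by ring
  calc ‖(jdet F x)⁻¹ • (fderiv ℝ F x - fderiv ℝ F y) +
        ((jdet F x)⁻¹ - (jdet F y)⁻¹) • fderiv ℝ F y‖
      ≤ ‖(jdet F x)⁻¹ • (fderiv ℝ F x - fderiv ℝ F y)‖ +
        ‖((jdet F x)⁻¹ - (jdet F y)⁻¹) • fderiv ℝ F y‖ := norm_add_le _ _
    _ ≤ (K / h ^ 2) * ((K * h ^ 2) * ‖x - y‖) +
        ((4 * K ^ 2 * h ^ 3) * ‖x - y‖ * (K / h ^ 2) * (K / h ^ 2)) * (K * h) := by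
        linarith
    _ = (K ^ 2 + 4 * K ^ 5) * ‖x - y‖ := by field_simp
    _ ≤ (5 * K ^ 5) * ‖x - y‖ := by
        apply mul_le_mul_of_nonneg_right _ (norm_nonneg _)
        have : K ^ 2 ≤ K ^ 5 := pow_le_pow_right₀ (by linarith) (by norm_num)
        linarith



lemma norm_bub (s t : ℝ) (x : E2) :
    ‖bub s t x‖ = Real.sqrt (s^2 + t^2) * |phi x| := by
  rw [bub, norm_pt]
  rw [show (s * phi x)^2 + (t * phi x)^2 = (s^2 + t^2) * (phi x)^2 by ring,
    Real.sqrt_mul (by positivity), Real.sqrt_sq_eq_abs]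

lemma bub_sub (s t : ℝ) (x y : E2) :
    bub s t x - bub s t y = pt (s * (phi x - phi y)) (t * (phi x - phi y)) := by
  ext i
  fin_cases i <;>
    simp [bub, PiLp.sub_apply, pt_apply_zero, pt_apply_one] <;> ring

lemma norm_bub_sub (s t : ℝ) (x y : E2) :
    ‖bub s t x - bub s t y‖ = Real.sqrt (s^2 + t^2) * |phi x - phi y| := by
  rw [bub_sub, norm_pt,
    show (s * (phi x - phi y))^2 + (t * (phi x - phi y))^2
      = (s^2 + t^2) * (phi x - phi y)^2 by ring,
    Real.sqrt_mul (by positivity), Real.sqrt_sq_eq_abs]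

lemma norm_bub_le {s t : ℝ} {x : E2} (hx : x ∈ refT) :
    ‖bub s t x‖ ≤ 11 * Real.sqrt (s^2 + t^2) := by
  rw [norm_bub]
  calc Real.sqrt (s^2+t^2) * |phi x| ≤ Real.sqrt (s^2+t^2) * 11 :=
        mul_le_mul_of_nonneg_left (abs_phi_le hx) (Real.sqrt_nonneg _)
    _ = 11 * Real.sqrt (s^2+t^2) := by ring

lemma bub_lip {s t : ℝ} {x y : E2} (hx : x ∈ refT) (hy : y ∈ refT) :
    ‖bub s t x - bub s t y‖ ≤ 24 * Real.sqrt (s^2 + t^2) * ‖x - y‖ := by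
  rw [norm_bub_sub]
  calc Real.sqrt (s^2+t^2) * |phi x - phi y|
      ≤ Real.sqrt (s^2+t^2) * (24 * ‖x - y‖) :=
        mul_le_mul_of_nonneg_left (phi_lipschitz hx hy) (Real.sqrt_nonneg _)
    _ = 24 * Real.sqrt (s^2+t^2) * ‖x - y‖ := by ring

/-- Difference of two CLM evaluations: Lipschitz-type bound. -/
lemma G_diff_bound {P Q P' : E2 →L[ℝ] E2} {u u' : E2} {LP Bu LB PB : ℝ}
    (h1 : ‖P - Q‖ ≤ LP) (h2 : ‖u‖ ≤ Bu) (h3 : ‖u - u'‖ ≤ LB) (h4 : ‖Q - P'‖ ≤ PB)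
    (hLP : 0 ≤ LP) (hBu : 0 ≤ Bu) :
    ‖(P - P') u - (Q - P') u'‖ ≤ LP * Bu + PB * LB := by
  have key : (P - P') u - (Q - P') u' = (P - Q) u + (Q - P') (u - u') := by
    simp only [ContinuousLinearMap.sub_apply, map_sub]
    abel
  rw [key]
  calc ‖(P - Q) u + (Q - P') (u - u')‖ ≤ ‖(P - Q) u‖ + ‖(Q - P') (u - u')‖ := norm_add_le _ _
    _ ≤ ‖P - Q‖ * ‖u‖ + ‖Q - P'‖ * ‖u - u'‖ := by
        gcongr <;> [exact (P - Q).le_opNorm u; exact (Q - P').le_opNorm (u - u')]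
    _ ≤ LP * Bu + PB * LB := by
        have h5 : (0:ℝ) ≤ PB := le_trans (norm_nonneg _) h4
        have := norm_nonneg (u - u')
        have := norm_nonneg (Q - P')
        gcongr



/-- Positivity of `∫_refT φ²`. -/
lemma c0_pos : 0 < ∫ x in refT, phi x ^ 2 := by
  set B := Metric.closedBall (pt (1/3) (1/3)) (1/20) with hB
  have hcoord : ∀ x ∈ B, |x 0 - 1/3| ≤ 1/20 ∧ |x 1 - 1/3| ≤ 1/20 := by
    intro x hx
    rw [hB, Metric.mem_closedBall, dist_eq_norm] at hx
    constructor
    · calc |x 0 - 1/3| = |(x - pt (1/3) (1/3)) 0| := by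
            rw [PiLp.sub_apply, pt_apply_zero]
        _ ≤ ‖x - pt (1/3) (1/3)‖ := coord_le_norm _ 0
        _ ≤ 1/20 := hx
    · calc |x 1 - 1/3| = |(x - pt (1/3) (1/3)) 1| := by
            rw [PiLp.sub_apply, pt_apply_one]
        _ ≤ ‖x - pt (1/3) (1/3)‖ := coord_le_norm _ 1
        _ ≤ 1/20 := hx
  have hBsub : B ⊆ refT := by
    intro x hx
    obtain ⟨h0, h1⟩ := hcoord x hx
    rw [abs_le] at h0 h1
    exact ⟨by linarith [h0.1], by linarith [h1.1], by linarith [h0.2, h1.2]⟩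
  have hphi : ∀ x ∈ B, (1/4 : ℝ) ≤ phi x ^ 2 := by
    intro x hx
    obtain ⟨h0, h1⟩ := hcoord x hx
    rw [abs_le] at h0 h1
    have hphge : (1/2 : ℝ) ≤ phi x := by unfold phi; nlinarith [h0.1, h0.2, h1.1, h1.2]
    nlinarith
  have hphiCont : Continuous fun x : E2 => phi x ^ 2 := by
    have h0 : Continuous fun x : E2 => x 0 := (EuclideanSpace.proj (0 : Fin 2)).continuous
    have h1 : Continuous fun x : E2 => x 1 := (EuclideanSpace.proj (1 : Fin 2)).continuous
    unfold phi; fun_prop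
  have hIntT : IntegrableOn (fun x : E2 => phi x ^ 2) refT :=
    hphiCont.continuousOn.integrableOn_compact isCompact_refT
  have hIntB : IntegrableOn (fun x : E2 => phi x ^ 2) B :=
    hphiCont.continuousOn.integrableOn_compact (isCompact_closedBall _ _)
  have hmeasB : MeasurableSet B := measurableSet_closedBall
  have step1 : ∫ x in B, (1/4 : ℝ) ≤ ∫ x in B, phi x ^ 2 :=
    setIntegral_mono_on (integrableOn_const measure_closedBall_lt_top.ne)
      hIntB hmeasB hphi
  have step2 : ∫ x in B, phi x ^ 2 ≤ ∫ x in refT, phi x ^ 2 :=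
    setIntegral_mono_set hIntT
      (Filter.Eventually.of_forall fun x => sq_nonneg _) hBsub.eventuallyLE
  have hvol : 0 < (volume B).toReal := by
    apply ENNReal.toReal_pos
    · exact (Metric.measure_closedBall_pos volume _ (by norm_num)).ne'
    · exact measure_closedBall_lt_top.ne
  have : ∫ x in B, (1/4 : ℝ) = (volume B).toReal * (1/4) := by
    rw [setIntegral_const]; simp [smul_eq_mul, measureReal_def]
  nlinarith [step1, step2, hvol]

/-- Localization of preimages near an interior point of the image. -/
lemma exists_delta {F : E2 → E2} (hInj : Set.InjOn F refT) (hFc : Continuous F)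
    {y : E2} (hy : y ∈ interior (F '' refT)) {r : ℝ} (hr : 0 < r) :
    ∃ x₀ ∈ refT, F x₀ = y ∧ ∃ δ > 0, Metric.ball y δ ⊆ F '' refT ∧
      ∀ y' ∈ Metric.ball y δ, ∀ x' ∈ refT, F x' = y' → ‖x' - x₀‖ < r := by
  have hyS : y ∈ F '' refT := interior_subset hy
  obtain ⟨x₀, hx₀T, hFx₀⟩ := hyS
  refine ⟨x₀, hx₀T, hFx₀, ?_⟩
  set Bad := F '' (refT \ Metric.ball x₀ r) with hBad
  have hBadCompact : IsCompact Bad :=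
    (isCompact_refT.diff Metric.isOpen_ball).image hFc
  have hyBad : y ∉ Bad := by
    rintro ⟨x', ⟨hx'T, hx'nb⟩, hFx'⟩
    apply hx'nb
    have : x' = x₀ := hInj hx'T hx₀T (hFx'.trans hFx₀.symm)
    rw [this]
    exact Metric.mem_ball_self hr
  have hopen : IsOpen Badᶜ := hBadCompact.isClosed.isOpen_compl
  obtain ⟨δ₁, hδ₁pos, hδ₁⟩ := Metric.isOpen_iff.mp hopen y hyBad
  obtain ⟨δ₂, hδ₂pos, hδ₂⟩ := Metric.isOpen_iff.mp isOpen_interior y hy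
  refine ⟨min δ₁ δ₂, lt_min hδ₁pos hδ₂pos, ?_, ?_⟩
  · exact fun z hz => interior_subset (hδ₂ (Metric.ball_subset_ball (min_le_right _ _) hz))
  · intro y' hy' x' hx'T hFx'
    by_contra hcon
    push_neg at hcon
    have : y' ∈ Bad := ⟨x', ⟨hx'T, fun hmem => absurd (mem_ball_iff_norm.mp hmem)
      (not_lt.mpr hcon)⟩, hFx'⟩
    exact hδ₁ (Metric.ball_subset_ball (min_le_left _ _) hy') this

/-- Quantitative local injectivity. -/
lemma F_lower {K h : ℝ} {F : E2 → E2} (hK : 1 ≤ K) (hh : 0 < h) (hh1 : h ≤ 1)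
    (hF : IsAdmissible K h F) (hsm : ContDiff ℝ (⊤ : ℕ∞) F) {x y : E2}
    (hx : x ∈ refT) (hy : y ∈ refT) (hnear : ‖x - y‖ ≤ 1 / (2 * K ^ 2)) :
    ‖x - y‖ ≤ (2 * K / h) * ‖F x - F y‖ := by
  have hdiff : Differentiable ℝ F := hsm.differentiable (by simp)
  set D₂ := fderiv ℝ F y with hD₂
  set g := fun z => F z - D₂ z with hg
  set s' := refT ∩ Metric.closedBall y (1 / (2 * K ^ 2)) with hs'
  have hs'conv : Convex ℝ s' := convex_refT.inter (convex_closedBall _ _)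
  have hgdiff : ∀ z ∈ s', DifferentiableAt ℝ g z :=
    fun z _ => (hdiff z).sub (D₂.differentiableAt)
  have hgderiv : ∀ z, DifferentiableAt ℝ F z → fderiv ℝ g z = fderiv ℝ F z - D₂ := by
    intro z hz
    rw [hg]
    rw [fderiv_fun_sub hz D₂.differentiableAt, D₂.fderiv]
  have hbound : ∀ z ∈ s', ‖fderiv ℝ g z‖ ≤ h / (2 * K) := by
    intro z hz
    rw [hgderiv z (hdiff z)]
    have hlip : ‖fderiv ℝ F z - fderiv ℝ F y‖ ≤ (K * h ^ 2) * ‖z - y‖ :=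
      Convex.norm_image_sub_le_of_norm_fderiv_le
        (fun w _ => (diff_fderiv hsm).differentiableAt)
        (fun w hw => D2F_bound hF hw) convex_refT hy hz.1
    have hznear : ‖z - y‖ ≤ 1 / (2 * K ^ 2) := by
      have := hz.2
      rwa [Metric.mem_closedBall, dist_eq_norm] at this
    calc ‖fderiv ℝ F z - D₂‖ ≤ (K * h ^ 2) * ‖z - y‖ := hlip
      _ ≤ (K * h ^ 2) * (1 / (2 * K ^ 2)) := by
          apply mul_le_mul_of_nonneg_left hznear (by positivity)
      _ = h ^ 2 / (2 * K) := by field_simp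
      _ ≤ h / (2 * K) := by
          apply div_le_div_of_nonneg_right _ (by positivity)
          nlinarith
  have hxs' : x ∈ s' := ⟨hx, by rwa [Metric.mem_closedBall, dist_eq_norm]⟩
  have hys' : y ∈ s' := ⟨hy, by simp only [Metric.mem_closedBall, dist_self]; positivity⟩
  have hmvt : ‖g x - g y‖ ≤ (h / (2 * K)) * ‖x - y‖ :=
    Convex.norm_image_sub_le_of_norm_fderiv_le hgdiff hbound hs'conv hys' hxs'
  have hgxy : g x - g y = (F x - F y) - D₂ (x - y) := by
    rw [hg]; simp only [map_sub]; abel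
  have hDlow : ‖x - y‖ ≤ (K / h) * ‖D₂ (x - y)‖ := DF_lower hK hh hF hy _
  have htri : ‖D₂ (x - y)‖ ≤ ‖F x - F y‖ + ‖g x - g y‖ := by
    have : D₂ (x - y) = (F x - F y) - (g x - g y) := by rw [hgxy]; abel
    rw [this]
    exact norm_sub_le _ _
  have hKpos : 0 < K := by linarith
  have h1 : ‖x - y‖ ≤ (K / h) * (‖F x - F y‖ + (h / (2 * K)) * ‖x - y‖) := by
    calc ‖x - y‖ ≤ (K / h) * ‖D₂ (x - y)‖ := hDlow
      _ ≤ (K / h) * (‖F x - F y‖ + (h / (2 * K)) * ‖x - y‖) := by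
          apply mul_le_mul_of_nonneg_left _ (by positivity)
          calc ‖D₂ (x - y)‖ ≤ ‖F x - F y‖ + ‖g x - g y‖ := htri
            _ ≤ ‖F x - F y‖ + (h / (2 * K)) * ‖x - y‖ := by linarith
  have hexp : (K / h) * (‖F x - F y‖ + (h / (2 * K)) * ‖x - y‖)
      = (K / h) * ‖F x - F y‖ + ‖x - y‖ / 2 := by field_simp
  rw [hexp] at h1
  have h2 : ‖x - y‖ / 2 ≤ (K / h) * ‖F x - F y‖ := by linarith
  calc ‖x - y‖ = 2 * (‖x - y‖ / 2) := by ring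
    _ ≤ 2 * ((K / h) * ‖F x - F y‖) := by linarith
    _ = (2 * K / h) * ‖F x - F y‖ := by ring


lemma vol_cb (c : E2) (r : ℝ) (hr : 0 ≤ r) :
    (volume (Metric.closedBall c r)).toReal ≤ 4 * r ^ 2 := by
  rw [EuclideanSpace.volume_closedBall]
  have hcard : Fintype.card (Fin 2) = 2 := by simp
  rw [hcard]
  have hΓ : Real.Gamma ((2:ℕ) / 2 + 1) = 1 := by norm_num
  have hπ : Real.sqrt Real.pi ^ 2 = Real.pi := Real.sq_sqrt Real.pi_nonneg
  rw [hΓ, hπ]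
  rw [ENNReal.toReal_mul, ENNReal.toReal_pow, ENNReal.toReal_ofReal hr,
    ENNReal.toReal_ofReal (by positivity)]
  have : Real.pi / 1 ≤ 4 := by
    rw [div_one]; exact Real.pi_le_four
  nlinarith [sq_nonneg r, Real.pi_nonneg, sq_nonneg r]

end S11


lemma arith2 {K h j A p sg : ℝ} (hK : 1 ≤ K) (hh : 0 < h) (hsg : 0 ≤ sg) (hA : 0 ≤ A)
    (hj' : h ^ 2 ≤ K * j) (hjp : 0 < j) (hb : sg * |p| ≤ K ^ 2 * h * A) :
    sg ^ 2 * p ^ 2 ≤ K ^ 5 * (j * A ^ 2) := by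
  have hKpos : 0 < K := by linarith
  have hsq : sg ^ 2 * p ^ 2 ≤ K ^ 4 * h ^ 2 * A ^ 2 := by
    have hmul := mul_le_mul hb hb (mul_nonneg hsg (abs_nonneg p)) (by positivity)
    nlinarith [sq_abs p]
  nlinarith [mul_nonneg (mul_nonneg (pow_nonneg hKpos.le 4) (sq_nonneg A))
    (sub_nonneg.mpr hj')]

set_option maxHeartbeats 1000000 in
/-- comparing the Piola-mapped bubble field with the one obtained
by freezing the Piola matrix at the barycenter of the reference triangle. -/
theorem stmt11 :
    ∀ K : ℝ, 1 ≤ K → ∃ C > (0 : ℝ),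
      ∀ h : ℝ, 0 < h → h ≤ 1 → ∀ F : E2 → E2, IsAdmissible K h F → ∀ s t : ℝ,
      ∀ phiT phiT' : E2 → E2,
        (∀ x ∈ refT, phiT (F x) = piola F x (bub s t x)) →
        (∀ x ∈ refT, phiT' (F x) = piola F (pt (1/3) (1/3)) (bub s t x)) →
        (Real.sqrt (∫ y in F '' refT, ‖phiT y - phiT' y‖ ^ 2) ≤
          C * h * Real.sqrt (∫ y in F '' refT, ‖phiT y‖ ^ 2)) ∧
        (Real.sqrt (∫ y in interior (F '' refT),
            ‖fderiv ℝ (fun z => phiT z - phiT' z) y‖ ^ 2) ≤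
          C * Real.sqrt (∫ y in F '' refT, ‖phiT y‖ ^ 2)) := by
  intro K hK
  have hc0 : 0 < ∫ x in refT, phi x ^ 2 := S11.c0_pos
  set c0 := ∫ x in refT, phi x ^ 2 with hc0def
  have hsc0 : 0 < Real.sqrt c0 := Real.sqrt_pos.mpr hc0
  refine ⟨20 * K ^ 7 + 9600 * K ^ 10 / Real.sqrt c0, by positivity, ?_⟩
  intro h hh hh1 F hF s t phiT phiT' hphiT hphiT'
  have hKpos : (0:ℝ) < K := by linarith
  set C := 20 * K ^ 7 + 9600 * K ^ 10 / Real.sqrt c0 with hCdef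
  set σ := Real.sqrt (s ^ 2 + t ^ 2) with hσdef
  have hσnn : 0 ≤ σ := Real.sqrt_nonneg _
  have hbT : pt (1/3) (1/3) ∈ refT := S11.bary_mem_refT
  have hsm : ContDiff ℝ (⊤ : ℕ∞) F := S11.contDiff_of_polyVec hF.1
  have hdiff : Differentiable ℝ F := hsm.differentiable (by simp)
  have hInj : Set.InjOn F refT := hF.2.1
  set G : E2 → E2 := fun x => (piola F x - piola F (pt (1/3) (1/3))) (bub s t x) with hGdef
  have hval1 : ∀ x ∈ refT, phiT (F x) - phiT' (F x) = G x := by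
    intro x hx
    rw [hphiT x hx, hphiT' x hx, hGdef]
    simp [ContinuousLinearMap.sub_apply]
  -- change of variables
  have I1eq : (∫ y in F '' refT, ‖phiT y - phiT' y‖ ^ 2)
      = ∫ x in refT, |jdet F x| * ‖G x‖ ^ 2 := by
    rw [MeasureTheory.integral_image_eq_integral_abs_det_fderiv_smul volume
      S11.measurableSet_refT (fun x _ => (hdiff x).hasFDerivAt.hasFDerivWithinAt) hInj
      (fun y => ‖phiT y - phiT' y‖ ^ 2)]
    apply MeasureTheory.setIntegral_congr_fun S11.measurableSet_refT
    intro x hx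
    simp only [smul_eq_mul]
    rw [hval1 x hx]
    rfl
  have I2eq : (∫ y in F '' refT, ‖phiT y‖ ^ 2)
      = ∫ x in refT, |jdet F x| * ‖piola F x (bub s t x)‖ ^ 2 := by
    rw [MeasureTheory.integral_image_eq_integral_abs_det_fderiv_smul volume
      S11.measurableSet_refT (fun x _ => (hdiff x).hasFDerivAt.hasFDerivWithinAt) hInj
      (fun y => ‖phiT y‖ ^ 2)]
    apply MeasureTheory.setIntegral_congr_fun S11.measurableSet_refT
    intro x hx
    simp only [smul_eq_mul]
    rw [hphiT x hx]
    rfl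
  -- continuity and integrability
  have hcDF : Continuous (fderiv ℝ F) := hsm.continuous_fderiv (by simp)
  have hcJ : Continuous (jdet F) := by
    have hjrw : jdet F = fun x => (fderiv ℝ F x).det := rfl
    rw [hjrw]
    exact ContinuousLinearMap.continuous_det.comp hcDF
  have hcP : ContinuousOn (fun x => piola F x) refT :=
    ContinuousOn.smul ((hcJ.continuousOn).inv₀ fun x hx => (S11.jdet_pos hK hh hF hx).ne')
      hcDF.continuousOn
  have hcphi : Continuous phi := by
    have h0 : Continuous fun x : E2 => x 0 := (EuclideanSpace.proj (0 : Fin 2)).continuous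
    have h1 : Continuous fun x : E2 => x 1 := (EuclideanSpace.proj (1 : Fin 2)).continuous
    unfold phi; fun_prop
  have hcbub : Continuous (bub s t) := by
    have hbrw : bub s t = fun x => phi x • pt s t := by
      funext x
      ext i
      fin_cases i <;>
        simp [bub, S11.pt_apply_zero, S11.pt_apply_one, PiLp.smul_apply, smul_eq_mul] <;> ring
    rw [hbrw]
    exact hcphi.smul continuous_const
  have hcG : ContinuousOn G refT := by
    rw [hGdef]
    exact (hcP.sub continuousOn_const).clm_apply hcbub.continuousOn
  have hcPb : ContinuousOn (fun x => piola F x (bub s t x)) refT :=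
    hcP.clm_apply hcbub.continuousOn
  have hint1 : MeasureTheory.IntegrableOn (fun x => |jdet F x| * ‖G x‖ ^ 2) refT :=
    ((hcJ.abs.continuousOn.mul (hcG.norm.pow 2)).integrableOn_compact S11.isCompact_refT)
  have hint2 : MeasureTheory.IntegrableOn
      (fun x => |jdet F x| * ‖piola F x (bub s t x)‖ ^ 2) refT :=
    ((hcJ.abs.continuousOn.mul (hcPb.norm.pow 2)).integrableOn_compact S11.isCompact_refT)
  have hintphi : MeasureTheory.IntegrableOn (fun x => phi x ^ 2) refT :=
    ((hcphi.pow 2).continuousOn.integrableOn_compact S11.isCompact_refT)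
  -- first pointwise bound
  have hpt1 : ∀ x ∈ refT, |jdet F x| * ‖G x‖ ^ 2
      ≤ (20 * K ^ 7 * h) ^ 2 * (|jdet F x| * ‖piola F x (bub s t x)‖ ^ 2) := by
    intro x hx
    have hop : ‖G x‖ ≤ ‖piola F x - piola F (pt (1/3) (1/3))‖ * ‖bub s t x‖ :=
      (piola F x - piola F (pt (1/3) (1/3))).le_opNorm _
    have hlipP : ‖piola F x - piola F (pt (1/3) (1/3))‖ ≤ 5 * K ^ 5 * 4 := by
      calc ‖piola F x - piola F (pt (1/3) (1/3))‖
          ≤ (5 * K ^ 5) * ‖x - pt (1/3) (1/3)‖ := S11.piola_lip hK hh hF hsm hx hbT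
        _ ≤ (5 * K ^ 5) * 4 := by
            exact mul_le_mul_of_nonneg_left (S11.dist_le_of_mem_refT hx hbT) (by positivity)
    have hlow := S11.piola_lower hK hh hF hx (bub s t x)
    have hG : ‖G x‖ ≤ (20 * K ^ 7 * h) * ‖piola F x (bub s t x)‖ := by
      calc ‖G x‖ ≤ (5 * K ^ 5 * 4) * ‖bub s t x‖ :=
            le_trans hop (mul_le_mul_of_nonneg_right hlipP (norm_nonneg _))
        _ ≤ (5 * K ^ 5 * 4) * ((K ^ 2 * h) * ‖piola F x (bub s t x)‖) :=
            mul_le_mul_of_nonneg_left hlow (by positivity)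
        _ = (20 * K ^ 7 * h) * ‖piola F x (bub s t x)‖ := by ring
    have h2 : ‖G x‖ ^ 2 ≤ (20 * K ^ 7 * h) ^ 2 * ‖piola F x (bub s t x)‖ ^ 2 := by
      nlinarith [norm_nonneg (G x), norm_nonneg (piola F x (bub s t x))]
    calc |jdet F x| * ‖G x‖ ^ 2
        ≤ |jdet F x| * ((20 * K ^ 7 * h) ^ 2 * ‖piola F x (bub s t x)‖ ^ 2) :=
          mul_le_mul_of_nonneg_left h2 (abs_nonneg _)
      _ = (20 * K ^ 7 * h) ^ 2 * (|jdet F x| * ‖piola F x (bub s t x)‖ ^ 2) := by ring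
  have hIneq1 : (∫ x in refT, |jdet F x| * ‖G x‖ ^ 2)
      ≤ (20 * K ^ 7 * h) ^ 2 * ∫ x in refT, |jdet F x| * ‖piola F x (bub s t x)‖ ^ 2 := by
    rw [← MeasureTheory.integral_const_mul]
    exact MeasureTheory.setIntegral_mono_on hint1 (hint2.const_mul _)
      S11.measurableSet_refT hpt1
  have hI2nonneg : 0 ≤ ∫ x in refT, |jdet F x| * ‖piola F x (bub s t x)‖ ^ 2 :=
    MeasureTheory.setIntegral_nonneg S11.measurableSet_refT fun x _ => by positivity
  -- lower bound for the right-hand side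
  have hpt2 : ∀ x ∈ refT, σ ^ 2 * phi x ^ 2
      ≤ K ^ 5 * (|jdet F x| * ‖piola F x (bub s t x)‖ ^ 2) := by
    intro x hx
    have hjp := S11.jdet_pos hK hh hF hx
    have hj' : h ^ 2 ≤ K * jdet F x := (inv_mul_le_iff₀ hKpos).mp (S11.jdet_lb hF hx)
    have hblow := S11.piola_lower hK hh hF hx (bub s t x)
    have hnb : ‖bub s t x‖ = σ * |phi x| := S11.norm_bub s t x
    have hb' : σ * |phi x| ≤ K ^ 2 * h * ‖piola F x (bub s t x)‖ := by
      rw [← hnb]; exact hblow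
    rw [abs_of_pos hjp]
    exact arith2 hK hh hσnn (norm_nonneg _) hj' hjp hb'
  have hIneq2 : σ ^ 2 * c0
      ≤ K ^ 5 * ∫ x in refT, |jdet F x| * ‖piola F x (bub s t x)‖ ^ 2 := by
    have hmono := MeasureTheory.setIntegral_mono_on (hintphi.const_mul (σ ^ 2))
      (hint2.const_mul (K ^ 5)) S11.measurableSet_refT hpt2
    rwa [MeasureTheory.integral_const_mul, MeasureTheory.integral_const_mul] at hmono
  constructor
  · -- first estimate
    rw [I1eq, I2eq]
    have hs1 : Real.sqrt (∫ x in refT, |jdet F x| * ‖G x‖ ^ 2)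
        ≤ (20 * K ^ 7 * h) *
          Real.sqrt (∫ x in refT, |jdet F x| * ‖piola F x (bub s t x)‖ ^ 2) := by
      calc Real.sqrt (∫ x in refT, |jdet F x| * ‖G x‖ ^ 2)
          ≤ Real.sqrt ((20 * K ^ 7 * h) ^ 2 *
            ∫ x in refT, |jdet F x| * ‖piola F x (bub s t x)‖ ^ 2) :=
            Real.sqrt_le_sqrt hIneq1
        _ = (20 * K ^ 7 * h) *
            Real.sqrt (∫ x in refT, |jdet F x| * ‖piola F x (bub s t x)‖ ^ 2) := by
            rw [Real.sqrt_mul (by positivity), Real.sqrt_sq (by positivity)]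
    have hC20 : 20 * K ^ 7 ≤ C := by
      rw [hCdef]
      have : 0 ≤ 9600 * K ^ 10 / Real.sqrt c0 := by positivity
      linarith
    calc Real.sqrt (∫ x in refT, |jdet F x| * ‖G x‖ ^ 2)
        ≤ (20 * K ^ 7 * h) *
          Real.sqrt (∫ x in refT, |jdet F x| * ‖piola F x (bub s t x)‖ ^ 2) := hs1
      _ ≤ C * h *
          Real.sqrt (∫ x in refT, |jdet F x| * ‖piola F x (bub s t x)‖ ^ 2) := by
          apply mul_le_mul_of_nonneg_right _ (Real.sqrt_nonneg _)
          exact mul_le_mul_of_nonneg_right hC20 hh.le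
  · -- second estimate
    rw [I2eq]
    set D := fun z => phiT z - phiT' z with hD
    set M := 1200 * K ^ 6 * σ / h with hM
    have hMnn : 0 ≤ M := by positivity
    have hfd : ∀ y ∈ interior (F '' refT), ‖fderiv ℝ D y‖ ≤ M := by
      intro y hy
      obtain ⟨x₀, hx₀T, hFx₀, δ, hδpos, hballS, hloc⟩ :=
        S11.exists_delta hInj hsm.continuous hy (r := 1 / (4 * K ^ 2)) (by positivity)
      have hlip : ∀ y' ∈ Metric.ball y δ, ‖D y' - D y‖ ≤ M * ‖y' - y‖ := by
        intro y' hy'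
        obtain ⟨x', hx'T, hFx'⟩ := hballS hy'
        have hx'near : ‖x' - x₀‖ < 1 / (4 * K ^ 2) := hloc y' hy' x' hx'T hFx'
        have hnear2 : ‖x' - x₀‖ ≤ 1 / (2 * K ^ 2) := by
          have hq : 1 / (4 * K ^ 2) ≤ 1 / (2 * K ^ 2) :=
            one_div_le_one_div_of_le (by positivity) (by nlinarith)
          linarith
        have hFl : ‖x' - x₀‖ ≤ (2 * K / h) * ‖F x' - F x₀‖ :=
          S11.F_lower hK hh hh1 hF hsm hx'T hx₀T hnear2
        have hDval : D y' - D y = G x' - G x₀ := by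
          rw [hD]
          simp only
          rw [← hFx', ← hFx₀, hval1 x' hx'T, hval1 x₀ hx₀T]
        have hGlip : ‖G x' - G x₀‖ ≤ (600 * K ^ 5 * σ) * ‖x' - x₀‖ := by
          rw [hGdef]
          simp only
          have hQP : ‖piola F x₀ - piola F (pt (1/3) (1/3))‖ ≤ 5 * K ^ 5 * 4 := by
            calc ‖piola F x₀ - piola F (pt (1/3) (1/3))‖
                ≤ (5 * K ^ 5) * ‖x₀ - pt (1/3) (1/3)‖ := S11.piola_lip hK hh hF hsm hx₀T hbT
              _ ≤ (5 * K ^ 5) * 4 :=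
                  mul_le_mul_of_nonneg_left (S11.dist_le_of_mem_refT hx₀T hbT) (by positivity)
          have hGd := S11.G_diff_bound (P := piola F x') (Q := piola F x₀)
            (P' := piola F (pt (1/3) (1/3))) (u := bub s t x') (u' := bub s t x₀)
            (S11.piola_lip hK hh hF hsm hx'T hx₀T)
            (S11.norm_bub_le hx'T)
            (S11.bub_lip hx'T hx₀T)
            hQP (by positivity) (by positivity)
          calc ‖(piola F x' - piola F (pt (1/3) (1/3))) (bub s t x') -
                (piola F x₀ - piola F (pt (1/3) (1/3))) (bub s t x₀)‖
              ≤ 5 * K ^ 5 * ‖x' - x₀‖ * (11 * Real.sqrt (s ^ 2 + t ^ 2)) +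
                (5 * K ^ 5 * 4) * (24 * Real.sqrt (s ^ 2 + t ^ 2) * ‖x' - x₀‖) := hGd
            _ = (535 * K ^ 5 * σ) * ‖x' - x₀‖ := by rw [← hσdef]; ring
            _ ≤ (600 * K ^ 5 * σ) * ‖x' - x₀‖ := by
                apply mul_le_mul_of_nonneg_right _ (norm_nonneg _)
                nlinarith [pow_nonneg hKpos.le 5]
        calc ‖D y' - D y‖ = ‖G x' - G x₀‖ := by rw [hDval]
          _ ≤ (600 * K ^ 5 * σ) * ‖x' - x₀‖ := hGlip
          _ ≤ (600 * K ^ 5 * σ) * ((2 * K / h) * ‖F x' - F x₀‖) :=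
              mul_le_mul_of_nonneg_left hFl (by positivity)
          _ = M * ‖F x' - F x₀‖ := by rw [hM]; ring
          _ = M * ‖y' - y‖ := by rw [hFx', hFx₀]
      by_cases hdy : DifferentiableAt ℝ D y
      · exact hdy.hasFDerivAt.le_of_lip' hMnn
          (Filter.eventually_iff_exists_mem.mpr ⟨Metric.ball y δ,
            Metric.ball_mem_nhds y hδpos, hlip⟩)
      · rw [fderiv_zero_of_not_differentiableAt hdy]
        simpa using hMnn
    -- measure bound
    have hSsub : F '' refT ⊆ Metric.closedBall (F (pt (1/3) (1/3))) (4 * K * h) := by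
      rintro y ⟨x, hxT, rfl⟩
      rw [Metric.mem_closedBall, dist_eq_norm]
      calc ‖F x - F (pt (1/3) (1/3))‖ ≤ (K * h) * ‖x - pt (1/3) (1/3)‖ :=
            Convex.norm_image_sub_le_of_norm_fderiv_le (fun z _ => hdiff z)
              (fun z hz => S11.DF_bound hF hz) S11.convex_refT hbT hxT
        _ ≤ (K * h) * 4 :=
            mul_le_mul_of_nonneg_left (S11.dist_le_of_mem_refT hxT hbT) (by positivity)
        _ = 4 * K * h := by ring
    have hμle : volume (interior (F '' refT))
        ≤ volume (Metric.closedBall (F (pt (1/3) (1/3))) (4 * K * h)) :=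
      measure_mono (interior_subset.trans hSsub)
    have hvolS : (volume (interior (F '' refT))).toReal ≤ 64 * K ^ 2 * h ^ 2 := by
      calc (volume (interior (F '' refT))).toReal
          ≤ (volume (Metric.closedBall (F (pt (1/3) (1/3))) (4 * K * h))).toReal :=
            ENNReal.toReal_mono measure_closedBall_lt_top.ne hμle
        _ ≤ 4 * (4 * K * h) ^ 2 := S11.vol_cb _ _ (by positivity)
        _ = 64 * K ^ 2 * h ^ 2 := by ring
    have hfin : volume (interior (F '' refT)) ≠ ⊤ :=
      (lt_of_le_of_lt hμle measure_closedBall_lt_top).ne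
    have hmeasI : MeasurableSet (interior (F '' refT)) := isOpen_interior.measurableSet
    have hgmeas : MeasureTheory.AEStronglyMeasurable (fun y => ‖fderiv ℝ D y‖ ^ 2) volume :=
      ((measurable_fderiv ℝ D).norm.pow_const 2).aestronglyMeasurable
    have hIntD : MeasureTheory.IntegrableOn (fun y => ‖fderiv ℝ D y‖ ^ 2)
        (interior (F '' refT)) := by
      apply MeasureTheory.Measure.integrableOn_of_bounded (M := M ^ 2) hfin hgmeas
      rw [MeasureTheory.ae_restrict_iff' hmeasI]
      refine Filter.Eventually.of_forall fun y hy => ?_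
      rw [Real.norm_of_nonneg (by positivity)]
      nlinarith [hfd y hy, norm_nonneg (fderiv ℝ D y)]
    have hImono : (∫ y in interior (F '' refT), ‖fderiv ℝ D y‖ ^ 2)
        ≤ M ^ 2 * (volume (interior (F '' refT))).toReal := by
      have hconst : MeasureTheory.IntegrableOn (fun _ : E2 => M ^ 2)
          (interior (F '' refT)) :=
        MeasureTheory.integrableOn_const (lt_of_le_of_lt hμle
          measure_closedBall_lt_top).ne
      have hmono := MeasureTheory.setIntegral_mono_on hIntD hconst hmeasI
        (fun y hy => by nlinarith [hfd y hy, norm_nonneg (fderiv ℝ D y)])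
      rwa [MeasureTheory.setIntegral_const, smul_eq_mul, mul_comm, measureReal_def] at hmono
    have hL2 : (∫ y in interior (F '' refT), ‖fderiv ℝ D y‖ ^ 2)
        ≤ (9600 * K ^ 7 * σ) ^ 2 := by
      calc (∫ y in interior (F '' refT), ‖fderiv ℝ D y‖ ^ 2)
          ≤ M ^ 2 * (volume (interior (F '' refT))).toReal := hImono
        _ ≤ M ^ 2 * (64 * K ^ 2 * h ^ 2) :=
            mul_le_mul_of_nonneg_left hvolS (by positivity)
        _ = (9600 * K ^ 7 * σ) ^ 2 := by rw [hM]; field_simp; ring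
    have hsqrtL : Real.sqrt (∫ y in interior (F '' refT), ‖fderiv ℝ D y‖ ^ 2)
        ≤ 9600 * K ^ 7 * σ := by
      calc Real.sqrt (∫ y in interior (F '' refT), ‖fderiv ℝ D y‖ ^ 2)
          ≤ Real.sqrt ((9600 * K ^ 7 * σ) ^ 2) := Real.sqrt_le_sqrt hL2
        _ = 9600 * K ^ 7 * σ := Real.sqrt_sq (by positivity)
    have hRlow : σ * Real.sqrt c0 / K ^ 3
        ≤ Real.sqrt (∫ x in refT, |jdet F x| * ‖piola F x (bub s t x)‖ ^ 2) := by
      rw [show σ * Real.sqrt c0 / K ^ 3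
        = Real.sqrt ((σ * Real.sqrt c0 / K ^ 3) ^ 2) from
          (Real.sqrt_sq (by positivity)).symm]
      apply Real.sqrt_le_sqrt
      have hexp : (σ * Real.sqrt c0 / K ^ 3) ^ 2 = σ ^ 2 * c0 / K ^ 6 := by
        rw [div_pow, mul_pow, Real.sq_sqrt hc0.le]
        ring
      rw [hexp, div_le_iff₀ (by positivity)]
      have hKK : K ^ 5 ≤ K ^ 6 := pow_le_pow_right₀ hK (by norm_num)
      calc σ ^ 2 * c0
          ≤ K ^ 5 * ∫ x in refT, |jdet F x| * ‖piola F x (bub s t x)‖ ^ 2 := hIneq2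
        _ ≤ (∫ x in refT, |jdet F x| * ‖piola F x (bub s t x)‖ ^ 2) * K ^ 6 := by
            nlinarith [hI2nonneg]
    calc Real.sqrt (∫ y in interior (F '' refT), ‖fderiv ℝ D y‖ ^ 2)
        ≤ 9600 * K ^ 7 * σ := hsqrtL
      _ = (9600 * K ^ 10 / Real.sqrt c0) * (σ * Real.sqrt c0 / K ^ 3) := by
          field_simp
      _ ≤ (9600 * K ^ 10 / Real.sqrt c0) *
          Real.sqrt (∫ x in refT, |jdet F x| * ‖piola F x (bub s t x)‖ ^ 2) :=
          mul_le_mul_of_nonneg_left hRlow (by positivity)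
      _ ≤ C * Real.sqrt (∫ x in refT, |jdet F x| * ‖piola F x (bub s t x)‖ ^ 2) := by
          apply mul_le_mul_of_nonneg_right _ (Real.sqrt_nonneg _)
          rw [hCdef]
          nlinarith [pow_nonneg hKpos.le 7]
end
end
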